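/- arXiv:1510.02014 — 10 statements merged into one kernel-verified Lean document; each statement's English description precedes it below -/
import Mathlib

section
/- Let G be a finite group, N a characteristic subgroup of G, x ∈ G and α an automorphism of G, and let A = A_{x,α}. Let Ã denote the induced affine map of the quotient G/N, i.e., Ã = A_{xN, α̃} where α̃ is the automorphism of G/N induced by α. Then there exists a subset M ⊆ N such that ord(A) = ord(Ã) · lcm_{m ∈ M} ord(A_{m, (α|_N)^{ord(Ã)}}), where α|_N denotes the restriction of α to an automorphism of N. -/
/-- The bijective affine map `A_{x,α} : g ↦ x * α g` as a permutation of `G`. -/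
def Aff {G : Type*} [Group G] (x : G) (α : G ≃* G) : Equiv.Perm G :=
  α.toEquiv.trans (Equiv.mulLeft x)

lemma Aff_apply {G : Type*} [Group G] (x : G) (α : G ≃* G) (g : G) :
    Aff x α g = x * α g := rfl

lemma Aff_pow_apply {G : Type*} [Group G] (x : G) (α : G ≃* G) (n : ℕ) (g : G) :
    (Aff x α ^ n) g = ((Aff x α ^ n) 1) * ((α : MulAut G) ^ n) g := by
  induction n generalizing g with
  | zero => simp
  | succ n ih =>
    have h1 : ∀ h : G, (Aff x α ^ (n+1)) h = x * α ((Aff x α ^ n) h) := by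
      intro h; rw [pow_succ']; rfl
    rw [h1, h1, ih, ih 1]
    simp [pow_succ', map_mul, mul_assoc, MulAut.mul_apply]

theorem stmt_2 {G : Type*} [Group G] [Fintype G] (N : Subgroup G) [N.Characteristic]
    (x : G) (α : G ≃* G)
    -- `β` is the automorphism of `G/N` induced by `α`:
    (β : (G ⧸ N) ≃* (G ⧸ N)) (hβ : ∀ g : G, β (g : G ⧸ N) = ((α g : G) : G ⧸ N))
    -- `γ` is the restriction of `α` to an automorphism of `N`:
    (γ : N ≃* N) (hγ : ∀ n : N, (γ n : G) = α (n : G)) :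
    ∃ M : Finset N,
      orderOf (Aff x α) =
        orderOf (Aff (x : G ⧸ N) β) *
          M.lcm fun m => orderOf (Aff m ((γ : MulAut N) ^ orderOf (Aff (x : G ⧸ N) β))) := by
  classical
  set A := Aff x α with hA
  set B := Aff (x : G ⧸ N) β with hB
  set k := orderOf B with hk
  -- projection intertwines
  have hπn : ∀ (n : ℕ) (g : G), (B ^ n) (g : G ⧸ N) = ((A ^ n) g : G ⧸ N) := by
    intro n
    induction n with
    | zero => intro g; simp
    | succ n ih =>
      intro g
      have h1 : (B ^ (n+1)) (g : G ⧸ N) = B ((B ^ n) (g : G ⧸ N)) := by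
        rw [pow_succ']; rfl
      have h2 : (A ^ (n+1)) g = A ((A ^ n) g) := by rw [pow_succ']; rfl
      rw [h1, h2, ih, hB, hA, Aff_apply, Aff_apply, hβ]
      rfl
  -- k divides orderOf A
  have hAk : k ∣ orderOf A := by
    apply orderOf_dvd_of_pow_eq_one
    ext q
    induction q using QuotientGroup.induction_on with
    | H g => rw [hπn, pow_orderOf_eq_one A]; rfl
  have hkpos : 0 < k := orderOf_pos B
  -- orderOf (A^k)
  have hordAk : orderOf A = k * orderOf (A ^ k) := by
    rw [orderOf_pow' A hkpos.ne', Nat.gcd_eq_right hAk, Nat.mul_div_cancel' hAk]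
  -- the element y = A^k 1 lies in N
  set y : G := (A ^ k) 1 with hy
  have hyq : (y : G ⧸ N) = 1 := by
    have := hπn k 1
    rw [pow_orderOf_eq_one B] at this
    simpa using this.symm
  have hcossub : ∀ g : G, ((((α : MulAut G) ^ k) g : G) : G ⧸ N) = (g : G ⧸ N) := by
    intro g
    have h1 := hπn k g
    rw [pow_orderOf_eq_one B, Aff_pow_apply] at h1
    rw [← hy] at h1
    have h2 : (g : G ⧸ N) = (y : G ⧸ N) * ((((α : MulAut G) ^ k) g : G) : G ⧸ N) := by
      simpa using h1
    rw [hyq, one_mul] at h2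
    exact h2.symm
  have hcos : ∀ g : G, g⁻¹ * y * ((α : MulAut G) ^ k) g ∈ N := by
    intro g
    rw [← QuotientGroup.eq_one_iff]
    have : ((g⁻¹ * y * ((α : MulAut G) ^ k) g : G) : G ⧸ N)
        = (g⁻¹ : G) * (y : G ⧸ N) * ((((α : MulAut G) ^ k) g : G) : G ⧸ N) := by
      simp [QuotientGroup.mk_mul]
    rw [this, hyq, hcossub g, mul_one]
    simp
  set m : G → N := fun g => ⟨g⁻¹ * y * ((α : MulAut G) ^ k) g, hcos g⟩ with hm
  set γk : MulAut N := (γ : MulAut N) ^ k with hγk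
  -- coercion of γ powers
  have hγn : ∀ (n : ℕ) (a : N), ((((γ : MulAut N) ^ n) a : N) : G) = ((α : MulAut G) ^ n) (a : G) := by
    intro n
    induction n with
    | zero => intro a; simp
    | succ n ih =>
      intro a
      rw [pow_succ', pow_succ', MulAut.mul_apply, MulAut.mul_apply, hγ, ih]
  -- conjugation identity
  have L2 : ∀ (g : G) (j : ℕ) (n : N), ((A ^ k) ^ j) (g * (n : G)) = g * (((Aff (m g) γk ^ j) n : N) : G) := by
    intro g j
    induction j with
    | zero => intro n; simp
    | succ j ih =>
      intro n
      have h1 : ((A ^ k) ^ (j+1)) (g * (n : G)) = (A ^ k) (((A ^ k) ^ j) (g * (n : G))) := by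
        rw [pow_succ']; rfl
      have h2 : (Aff (m g) γk ^ (j+1)) n = Aff (m g) γk ((Aff (m g) γk ^ j) n) := by
        rw [pow_succ']; rfl
      rw [h1, ih, h2, Aff_pow_apply, ← hy, Aff_apply]
      push_cast
      rw [hγn, map_mul]
      simp [hm, mul_assoc]
  -- order of A^k as lcm of orders of fiber maps
  have hlcm : orderOf (A ^ k) = Finset.univ.lcm (fun g : G => orderOf (Aff (m g) γk)) := by
    apply Nat.dvd_antisymm
    · apply orderOf_dvd_of_pow_eq_one
      ext g
      have hmem : (g : G) ∈ Finset.univ := Finset.mem_univ g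
      have hdvd : orderOf (Aff (m g) γk) ∣ Finset.univ.lcm (fun g : G => orderOf (Aff (m g) γk)) :=
        Finset.dvd_lcm hmem
      have hL := L2 g (Finset.univ.lcm (fun g : G => orderOf (Aff (m g) γk))) 1
      have hD : (Aff (m g) γk) ^ (Finset.univ.lcm (fun g : G => orderOf (Aff (m g) γk))) = 1 :=
        orderOf_dvd_iff_pow_eq_one.mp hdvd
      rw [hD] at hL
      simpa using hL
    · apply Finset.lcm_dvd
      intro g _
      apply orderOf_dvd_of_pow_eq_one
      ext n
      have := L2 g (orderOf (A ^ k)) n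
      rw [pow_orderOf_eq_one (A ^ k)] at this
      simp only [Equiv.Perm.coe_one, id_eq] at this
      have h2 : ((((Aff (m g) γk ^ orderOf (A ^ k)) n : N) : G)) = (n : G) := by
        exact mul_left_cancel this.symm
      simp only [Equiv.Perm.coe_one, id_eq]
      exact h2
  -- assemble
  refine ⟨Finset.image m Finset.univ, ?_⟩
  rw [Finset.lcm_image, hordAk, hlcm]
  rfl
end

section
/- Let G be a finite group and α an automorphism of G such that ord(α) divides |G|. Then the least common multiple over all x ∈ G of the orders of the permutations A_{x,α} divides |G|. -/
set_option maxHeartbeats 1000000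

open Subgroup

universe u

/-- Key p-group lemma: in a finite `p`-group `P` with normal subgroup `G` and a subgroup `K`
disjoint from `G` with `|K| * |G| = |P|` and `|K| ∣ |G|`, every element satisfies
`t ^ |G| = 1`. -/
lemma pgroup_exponent (p : ℕ) [hp : Fact p.Prime] (n : ℕ) :
    ∀ (P : Type u) [Group P] [Fintype P], Fintype.card P = n → IsPGroup p P →
    ∀ (G K : Subgroup P), G.Normal → Disjoint G K →
    Nat.card K * Nat.card G = Nat.card P → Nat.card K ∣ Nat.card G →
    ∀ t : P, t ^ (Nat.card G) = 1 := by
  induction n using Nat.strong_induction_on with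
  | _ n ih =>
    intro P _ _ hn hP G K hGN hdisj hcard hdvd t
    by_cases hL : K.normalCore = ⊥
    case pos =>
      obtain ⟨k, hk⟩ := hP t
      obtain ⟨c, hc, hct⟩ := (Nat.dvd_prime_pow hp.out).mp (orderOf_dvd_of_pow_eq_one hk)
      rcases Nat.eq_zero_or_pos c with hc0 | hc0
      · have : t = 1 := orderOf_eq_one_iff.mp (by rw [hct, hc0, pow_zero])
        simp [this]
      obtain ⟨r, hr⟩ := IsPGroup.iff_card.mp (hP.to_subgroup G)
      suffices hcr : c ≤ r by
        rw [hr]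
        exact orderOf_dvd_iff_pow_eq_one.mp (hct ▸ pow_dvd_pow p hcr)
      set u := t ^ p ^ (c - 1) with hu
      have hu1 : u⁻¹ ≠ 1 := by
        simp only [ne_eq, inv_eq_one, hu]
        intro h
        have := orderOf_dvd_of_pow_eq_one h
        rw [hct] at this
        have := (Nat.pow_dvd_pow_iff_le_right hp.out.one_lt).mp this
        omega
      have hbK : ∃ b : P, b * u⁻¹ * b⁻¹ ∉ K := by
        by_contra hall
        push_neg at hall
        exact hu1 (Subgroup.mem_bot.mp (hL ▸ (hall : ∀ b, b * u⁻¹ * b⁻¹ ∈ K)))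
      obtain ⟨b, hb⟩ := hbK
      set x₀ : P ⧸ K := ((b⁻¹ : P) : P ⧸ K) with hx₀
      have hfix : ∀ s : P, s • x₀ = x₀ ↔ b * s⁻¹ * b⁻¹ ∈ K := by
        intro s
        rw [hx₀]
        erw [MulAction.Quotient.smul_mk]
        rw [QuotientGroup.eq]
        have h' : (s • b⁻¹)⁻¹ * b⁻¹ = b * s⁻¹ * b⁻¹ := by
          simp only [smul_eq_mul]; group
        rw [h']
      have hufix : ¬ u • x₀ = x₀ := fun h => hb ((hfix u).mp h)
      have htpc : t ^ p ^ c = 1 := by rw [← hct, pow_orderOf_eq_one]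
      -- key step
      have key : ∀ e : ℕ, 0 < e → e < p ^ c → (t ^ e) • x₀ = x₀ → False := by
        intro e he1 he2 hst
        set d := Nat.gcd (p ^ c) e with hd
        obtain ⟨v, hvc, hdv⟩ := (Nat.dvd_prime_pow hp.out).mp (Nat.gcd_dvd_left (p ^ c) e)
        have hvlt : v < c := by
          rcases lt_or_eq_of_le hvc with h | h
          · exact h
          · exfalso
            have hpce : p ^ c ∣ e := by
              rw [← h, ← hdv]; exact Nat.gcd_dvd_right _ _
            have := Nat.le_of_dvd he1 hpce
            omega
        -- t ^ d fixes x₀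
        have h1 : (t ^ d) • x₀ = x₀ := by
          have hbez : (d : ℤ) = (p ^ c : ℕ) * Nat.gcdA (p ^ c) e + (e : ℕ) * Nat.gcdB (p ^ c) e :=
            Nat.gcd_eq_gcd_ab (p ^ c) e
          have ht1 : t ^ (d : ℤ) = (t ^ e) ^ Nat.gcdB (p ^ c) e := by
            rw [hbez, zpow_add, zpow_mul, zpow_mul, zpow_natCast, zpow_natCast, htpc, one_zpow,
              one_mul]
          have : t ^ d = (t ^ e) ^ Nat.gcdB (p ^ c) e := by rw [← zpow_natCast, ht1]
          rw [this]
          have hmem : t ^ e ∈ MulAction.stabilizer P x₀ := hst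
          exact Subgroup.zpow_mem _ hmem _
        -- hence u fixes x₀
        apply hufix
        have hdvd' : d ∣ p ^ (c - 1) := by
          rw [hd, hdv]; exact pow_dvd_pow p (by omega)
        have : u = (t ^ d) ^ (p ^ (c - 1) / d) := by
          rw [← pow_mul, Nat.mul_div_cancel' hdvd']
        rw [this]
        have hmem : t ^ d ∈ MulAction.stabilizer P x₀ := h1
        exact Subgroup.pow_mem _ hmem _
      -- the orbit map is injective on Fin (p ^ c)
      have step : ∀ i j : Fin (p ^ c), (i : ℕ) < (j : ℕ) →
          (t ^ (i : ℕ)) • x₀ = (t ^ (j : ℕ)) • x₀ → False := by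
        intro i j h hij
        have hsplit : t ^ (j : ℕ) = t ^ (i : ℕ) * t ^ ((j : ℕ) - (i : ℕ)) := by
          rw [← pow_add]
          congr 1
          omega
        rw [hsplit, mul_smul] at hij
        have h3 : (t ^ ((j : ℕ) - (i : ℕ))) • x₀ = x₀ := (smul_left_cancel _ hij).symm
        exact key _ (by omega) (by have := j.isLt; omega) h3
      have hinj : Function.Injective (fun j : Fin (p ^ c) => (t ^ (j : ℕ)) • x₀) := by
        intro i j hij
        simp only at hij
        rcases lt_trichotomy (i : ℕ) (j : ℕ) with h | h | h
        · exact absurd hij (fun hh => step i j h hh)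
        · exact Fin.ext h
        · exact absurd hij.symm (fun hh => step j i h hh)
      have hle : p ^ c ≤ Nat.card (P ⧸ K) := by
        have := Nat.card_le_card_of_injective _ hinj
        simpa using this
      have hq : Nat.card (P ⧸ K) = Nat.card G := by
        have h2 := Subgroup.card_eq_card_quotient_mul_card_subgroup K
        have hKpos : 0 < Nat.card K := Nat.card_pos
        nlinarith [h2, hcard]
      rw [hq, hr] at hle
      exact (Nat.pow_le_pow_iff_right hp.out.one_lt).mp hle
    case neg =>
      set L := K.normalCore with hLdef
      have hLK : L ≤ K := K.normalCore_le
      haveI : L.Normal := Subgroup.normalCore_normal K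
      haveI : Finite (P ⧸ L) := Quotient.finite _
      haveI : Fintype (P ⧸ L) := Fintype.ofFinite _
      set mk : P →* P ⧸ L := QuotientGroup.mk' L with hmk
      have hmksurj : Function.Surjective mk := QuotientGroup.mk'_surjective L
      set G' := G.map mk with hG'
      set K' := K.map mk with hK'
      -- cardinalities
      have hdGL : Disjoint G L := hdisj.mono_right hLK
      have hcardG' : Nat.card G' = Nat.card G := by
        have hker : (mk.domRestrict G).ker = ⊥ := by
          rw [MonoidHom.ker_restrict, hmk, QuotientGroup.ker_mk']
          rw [Subgroup.subgroupOf_eq_bot]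
          exact hdGL.symm
        have hinj : Function.Injective (mk.domRestrict G) :=
          (MonoidHom.ker_eq_bot_iff _).mp hker
        have : G' = (mk.domRestrict G).range := by rw [MonoidHom.restrict_range]
        rw [this]
        exact (Nat.card_congr (MonoidHom.ofInjective hinj).toEquiv).symm
      have hcardK : Nat.card K = Nat.card L * Nat.card K' := by
        have hker : (mk.domRestrict K).ker = L.subgroupOf K := by
          rw [MonoidHom.ker_restrict, hmk, QuotientGroup.ker_mk']
        have h1 := Subgroup.card_eq_card_quotient_mul_card_subgroup (mk.domRestrict K).ker
        have h2 : Nat.card (K ⧸ (mk.domRestrict K).ker) = Nat.card K' := by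
          have : K' = (mk.domRestrict K).range := by rw [MonoidHom.restrict_range]
          rw [this]
          exact Nat.card_congr (QuotientGroup.quotientKerEquivRange (mk.domRestrict K)).toEquiv
        have h3 : Nat.card (mk.domRestrict K).ker = Nat.card L := by
          rw [hker]
          exact Nat.card_congr (Subgroup.subgroupOfEquivOfLe hLK).toEquiv
        rw [h1, h2, h3, mul_comm]
      have hcardP : Nat.card P = Nat.card (P ⧸ L) * Nat.card L :=
        Subgroup.card_eq_card_quotient_mul_card_subgroup L
      have hLpos : 0 < Nat.card L := Nat.card_pos
      have hL2 : 1 < Nat.card L := (Subgroup.one_lt_card_iff_ne_bot L).mpr hL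
      -- hypotheses for quotient
      have hcard' : Nat.card K' * Nat.card G' = Nat.card (P ⧸ L) := by
        have : Nat.card L * (Nat.card K' * Nat.card G') = Nat.card L * Nat.card (P ⧸ L) := by
          calc Nat.card L * (Nat.card K' * Nat.card G')
            = (Nat.card L * Nat.card K') * Nat.card G' := by ring
          _ = Nat.card K * Nat.card G := by rw [← hcardK, hcardG']
          _ = Nat.card P := hcard
          _ = Nat.card L * Nat.card (P ⧸ L) := by rw [hcardP]; ring
        exact Nat.eq_of_mul_eq_mul_left hLpos this
      have hdvd' : Nat.card K' ∣ Nat.card G' := by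
        rw [hcardG']
        exact dvd_trans (Dvd.intro_left _ hcardK.symm) hdvd
      have hGN' : G'.Normal := Subgroup.Normal.map hGN mk hmksurj
      have hdisj' : Disjoint G' K' := by
        rw [Subgroup.disjoint_def]
        intro x hxG hxK
        obtain ⟨g, hg, hgx⟩ := hxG
        obtain ⟨k, hk, hkx⟩ := hxK
        have : (g : P ⧸ L) = (k : P ⧸ L) := by
          rw [← hkx] at hgx
          exact hgx
        have hgk : g⁻¹ * k ∈ L := QuotientGroup.eq.mp this
        have hgK : g ∈ K := by
          have h1 : g⁻¹ * k ∈ K := hLK hgk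
          have h2 : (g⁻¹ * k) * k⁻¹ ∈ K := K.mul_mem h1 (K.inv_mem hk)
          have h3 : g⁻¹ ∈ K := by simpa using h2
          simpa using K.inv_mem h3
        have : g = 1 := Subgroup.disjoint_def.mp hdisj hg hgK
        rw [← hgx, this, map_one]
      -- apply induction
      have hlt : Fintype.card (P ⧸ L) < n := by
        rw [← hn]
        have h1 : Nat.card (P ⧸ L) < Nat.card P := by
          rw [hcardP]
          nlinarith [Nat.card_pos (α := P ⧸ L)]
        simpa [Nat.card_eq_fintype_card] using h1
      have hP' : IsPGroup p (P ⧸ L) := hP.to_quotient L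
      have := ih (Fintype.card (P ⧸ L)) hlt (P ⧸ L) rfl hP' G' K' hGN' hdisj' hcard' hdvd' (mk t)
      rw [hcardG'] at this
      -- t ^ card G lands in L
      have htL : t ^ Nat.card G ∈ L := by
        have : mk (t ^ Nat.card G) = 1 := by rw [map_pow]; exact this
        rwa [hmk, ← MonoidHom.mem_ker, QuotientGroup.ker_mk'] at this
      -- t ^ card G lands in G
      have htG : t ^ Nat.card G ∈ G := by
        obtain ⟨s, hs⟩ := hdvd
        have h1 : (QuotientGroup.mk' G t) ^ Nat.card K = 1 := by
          have hcq : Nat.card (P ⧸ G) = Nat.card K := by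
            have h2 := Subgroup.card_eq_card_quotient_mul_card_subgroup G
            have hGpos : 0 < Nat.card G := Nat.card_pos
            nlinarith [h2, hcard]
          rw [← hcq]
          exact pow_card_eq_one'
        have h2 : t ^ Nat.card K ∈ G := by
          rw [← QuotientGroup.eq_one_iff]
          simpa using h1
        have h3 : t ^ Nat.card G = (t ^ Nat.card K) ^ s := by rw [← pow_mul, ← hs]
        rw [h3]
        exact G.pow_mem h2 s
      have : t ^ Nat.card G ∈ G ⊓ K := ⟨htG, hLK htL⟩
      rw [hdisj.eq_bot] at this
      exact Subgroup.mem_bot.mp this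

theorem exponent_dvd_of_complement {P : Type u} [Group P] [Fintype P]
    (G K : Subgroup P) (hGN : G.Normal) (hdisj : Disjoint G K)
    (hcard : Nat.card K * Nat.card G = Nat.card P) (hdvd : Nat.card K ∣ Nat.card G)
    (t : P) : t ^ (Nat.card G) = 1 := by
  rw [← orderOf_dvd_iff_pow_eq_one]
  have hGpos : Nat.card G ≠ 0 := Nat.card_pos.ne'
  have hKpos : Nat.card K ≠ 0 := Nat.card_pos.ne'
  have hPpos : Nat.card P ≠ 0 := Nat.card_pos.ne'
  have hnpos : orderOf t ≠ 0 := (orderOf_pos t).ne'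
  rw [← Nat.factorization_le_iff_dvd hnpos hGpos]
  intro p
  by_cases hp : p.Prime
  swap
  · simp [Nat.factorization_eq_zero_of_not_prime _ hp]
  haveI : Fact p.Prime := ⟨hp⟩
  set n := orderOf t with hn
  set c := n.factorization p with hc
  set b := (Nat.card G).factorization p with hb
  set a := (Nat.card K).factorization p with ha
  show c ≤ b
  have hab : a ≤ b := (Nat.factorization_le_iff_dvd hKpos hGpos).mpr hdvd p
  have hA : (Nat.card P).factorization p = a + b := by
    rw [← hcard, Nat.factorization_mul hKpos hGpos]
    rfl
  -- the p-part of t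
  set t₁ := t ^ (n / p ^ c) with ht₁
  have hpcn : p ^ c ∣ n := Nat.ordProj_dvd n p
  have hq0 : n / p ^ c ≠ 0 := by
    have := Nat.div_pos (Nat.le_of_dvd (Nat.pos_of_ne_zero hnpos) hpcn)
      (Nat.pos_of_ne_zero (pow_ne_zero _ hp.ne_zero))
    omega
  have hord : orderOf t₁ = p ^ c := by
    rw [ht₁, orderOf_pow' t hq0, ← hn, Nat.gcd_eq_right (Nat.div_dvd_of_dvd hpcn),
      Nat.div_div_self hpcn hnpos]
  -- Sylow subgroup of K, pushed into P
  let Kp : Sylow p K := default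
  let Ksub : Subgroup P := (Kp : Subgroup K).map K.subtype
  have hKsubK : Ksub ≤ K := Subgroup.map_subtype_le _
  have hKsubP : IsPGroup p Ksub := (Kp.isPGroup').map K.subtype
  have hcardKsub : Nat.card Ksub = p ^ a := by
    have := Sylow.card_eq_multiplicity Kp
    have he : Nat.card Ksub = Nat.card Kp :=
      (Nat.card_congr (Subgroup.equivMapOfInjective _ _ (Subgroup.subtype_injective K)).toEquiv).symm
    rw [he, this, ha]
  obtain ⟨S, hKpS⟩ := hKsubP.exists_le_sylow
  have hScard : Nat.card S = p ^ (a + b) := by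
    rw [Sylow.card_eq_multiplicity S, hA]
  -- the subgroup S ∩ G inside S
  set G₀ : Subgroup S := G.subgroupOf S with hG₀
  set K₀ : Subgroup S := Ksub.subgroupOf S with hK₀
  have hK₀card : Nat.card K₀ = p ^ a := by
    rw [hK₀]
    rw [Nat.card_congr (Subgroup.subgroupOfEquivOfLe hKpS).toEquiv]
    exact hcardKsub
  -- compute card G₀ = p ^ b
  set ψ : S →* P ⧸ G := (QuotientGroup.mk' G).comp (S : Subgroup P).subtype with hψ
  have hkerψ : ψ.ker = G₀ := by
    rw [hψ, ← MonoidHom.comap_ker, QuotientGroup.ker_mk']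
    rfl
  have hG₀card : Nat.card G₀ = p ^ b := by
    have h1 : Nat.card S = Nat.card (S ⧸ ψ.ker) * Nat.card ψ.ker :=
      Subgroup.card_eq_card_quotient_mul_card_subgroup ψ.ker
    have h2 : Nat.card (S ⧸ ψ.ker) = Nat.card ψ.range :=
      Nat.card_congr (QuotientGroup.quotientKerEquivRange ψ).toEquiv
    have hrangep : IsPGroup p ψ.range :=
      IsPGroup.of_surjective S.isPGroup' ψ.rangeRestrict ψ.rangeRestrict_surjective
    obtain ⟨e, he⟩ := IsPGroup.iff_card.mp hrangep
    have hcq : Nat.card (P ⧸ G) = Nat.card K := by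
      have h3 := Subgroup.card_eq_card_quotient_mul_card_subgroup G
      have hGpos' : 0 < Nat.card G := Nat.card_pos
      nlinarith [h3, hcard]
    have hdvdK : Nat.card ψ.range ∣ Nat.card K := by
      rw [← hcq]
      exact Subgroup.card_subgroup_dvd_card ψ.range
    have hea : e ≤ a := by
      rw [ha]
      exact ((Nat.Prime.pow_dvd_iff_le_factorization hp) hKpos).mp (he ▸ hdvdK)
    -- injective hom G₀ →* G
    have hdvdG : Nat.card G₀ ∣ Nat.card G := by
      let j : G₀ →* G :=
        { toFun := fun x => ⟨(x : S), x.2⟩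
          map_one' := rfl
          map_mul' := fun _ _ => rfl }
      have hjinj : Function.Injective j := by
        intro x y h
        have h2 : (j x).val = (j y).val := by rw [h]
        exact Subtype.ext (Subtype.ext h2)
      exact Subgroup.card_dvd_of_injective j hjinj
    have h4 : Nat.card S = p ^ e * Nat.card G₀ := by
      rw [h1, h2, he, hkerψ]
    have h5 : Nat.card G₀ = p ^ (a + b - e) := by
      have := hScard ▸ h4
      have hpe : (0:ℕ) < p ^ e := Nat.pos_of_ne_zero (pow_ne_zero _ hp.ne_zero)
      have : p ^ e * Nat.card G₀ = p ^ e * p ^ (a + b - e) := by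
        rw [← pow_add]
        rw [← this]
        congr 1
        omega
      exact Nat.eq_of_mul_eq_mul_left hpe this
    have h6 : a + b - e ≤ b := by
      have := ((Nat.Prime.pow_dvd_iff_le_factorization hp) hGpos).mp (h5 ▸ hdvdG)
      omega
    have : e = a := by omega
    rw [h5]
    congr 1
    omega
  -- apply the p-group lemma to S
  have hG₀N : G₀.Normal := hGN.subgroupOf S
  have hdisj₀ : Disjoint G₀ K₀ := by
    rw [Subgroup.disjoint_def]
    intro x hxG hxK
    have h1 : (x : P) ∈ G := hxG
    have h2 : (x : P) ∈ K := hKsubK hxK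
    have h3 := Subgroup.disjoint_def.mp hdisj h1 h2
    exact Subtype.ext (by simpa using h3)
  have hcard₀ : Nat.card K₀ * Nat.card G₀ = Nat.card S := by
    rw [hK₀card, hG₀card, hScard, pow_add]
  have hdvd₀ : Nat.card K₀ ∣ Nat.card G₀ := by
    rw [hK₀card, hG₀card]; exact pow_dvd_pow p hab
  haveI : Fintype S := Fintype.ofFinite _
  have hplem := pgroup_exponent p (Fintype.card S) S rfl S.isPGroup'
    G₀ K₀ hG₀N hdisj₀ hcard₀ hdvd₀
  -- conjugate t₁ into S
  have hzp : IsPGroup p (Subgroup.zpowers t₁) :=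
    IsPGroup.of_card (by rw [Nat.card_zpowers, hord])
  obtain ⟨S₁, hS₁⟩ := hzp.exists_le_sylow
  obtain ⟨g, hg⟩ := MulAction.exists_smul_eq P S₁ S
  have ht₁S : g * t₁ * g⁻¹ ∈ (S : Subgroup P) := by
    rw [← hg, Sylow.coe_subgroup_smul, Subgroup.mem_pointwise_smul_iff_inv_smul_mem]
    have ht₁S₁ : t₁ ∈ (S₁ : Subgroup P) := hS₁ (Subgroup.mem_zpowers t₁)
    have : (MulAut.conj g)⁻¹ • (g * t₁ * g⁻¹) = t₁ := by
      simp [MulAut.smul_def]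
      group
    rw [this]
    exact ht₁S₁
  have hs := hplem ⟨g * t₁ * g⁻¹, ht₁S⟩
  have hsp : (g * t₁ * g⁻¹) ^ Nat.card G₀ = 1 := by
    have h5 := congrArg (fun z : S => (z : P)) hs
    simpa using h5
  rw [hG₀card] at hsp
  have ht₁pow : t₁ ^ p ^ b = 1 := by
    rw [conj_pow] at hsp
    have : t₁ ^ p ^ b = g⁻¹ * (g * t₁ ^ p ^ b * g⁻¹) * g := by group
    rw [this, hsp]
    group
  have hdd : p ^ c ∣ p ^ b := hord ▸ orderOf_dvd_of_pow_eq_one ht₁pow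
  exact (Nat.pow_dvd_pow_iff_le_right hp.one_lt).mp hdd

/-- An equiv. -/
def sdpEquiv {N G : Type*} [Group N] [Group G] (φ : G →* MulAut N) :
    (N ⋊[φ] G) ≃ N × G where
  toFun s := (s.left, s.right)
  invFun p := ⟨p.1, p.2⟩
  left_inv s := rfl
  right_inv p := rfl

noncomputable instance sdpFintype {N G : Type*} [Group N] [Group G] (φ : G →* MulAut N)
    [Fintype N] [Fintype G] : Fintype (N ⋊[φ] G) :=
  Fintype.ofEquiv (N × G) (sdpEquiv φ).symm

theorem stmt_5 {G : Type*} [Group G] [Fintype G] (α : MulAut G)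
    (hα : orderOf α ∣ Fintype.card G) :
    (Finset.univ.lcm fun x : G => orderOf (Aff x α)) ∣ Fintype.card G := by
  classical
  haveI : Finite (MulAut G) := by
    exact Finite.of_injective (fun (a : MulAut G) => (a : G → G))
      (fun a b h => by ext g; exact congrFun h g)
  set H : Subgroup (MulAut G) := Subgroup.zpowers α with hH
  haveI : Fintype H := Fintype.ofFinite _
  set φ : H →* MulAut G := H.subtype with hφ
  -- the semidirect product
  set P := G ⋊[φ] H with hP
  set Gs : Subgroup P := (SemidirectProduct.inl : G →* P).range with hGs
  set Ks : Subgroup P := (SemidirectProduct.inr : H →* P).range with hKs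
  have hGN : Gs.Normal := by
    rw [hGs, SemidirectProduct.range_inl_eq_ker_rightHom]
    infer_instance
  have hdisj : Disjoint Gs Ks := by
    rw [Subgroup.disjoint_def]
    rintro x ⟨n, rfl⟩ ⟨k, hk⟩
    have h1 : SemidirectProduct.rightHom (SemidirectProduct.inl n : P) = 1 := by simp
    have h2 : SemidirectProduct.rightHom (SemidirectProduct.inr k : P) = k := by simp
    rw [hk, h1] at h2
    rw [← hk, ← h2, map_one]
  have hcardGs : Nat.card Gs = Nat.card G :=
    (Nat.card_congr (MonoidHom.ofInjective SemidirectProduct.inl_injective).toEquiv).symm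
  have hcardKs : Nat.card Ks = Nat.card H :=
    (Nat.card_congr (MonoidHom.ofInjective SemidirectProduct.inr_injective).toEquiv).symm
  have hcardP : Nat.card P = Nat.card G * Nat.card H := by
    rw [Nat.card_congr (sdpEquiv φ), Nat.card_prod]
  have hcard : Nat.card Ks * Nat.card Gs = Nat.card P := by
    rw [hcardGs, hcardKs, hcardP, mul_comm]
  have hdvd : Nat.card Ks ∣ Nat.card Gs := by
    rw [hcardGs, hcardKs, hH, Nat.card_zpowers, Nat.card_eq_fintype_card]
    exact hα
  -- the homomorphism P →* Perm G
  set f₁ : G →* Equiv.Perm G := MulAction.toPermHom G G with hf₁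
  set f₂ : H →* Equiv.Perm G := (MulAction.toPermHom (MulAut G) G).comp H.subtype with hf₂
  have hcomp : ∀ h : H, f₁.comp ((φ h).toMonoidHom) =
      (MulAut.conj (f₂ h)).toMonoidHom.comp f₁ := by
    intro h
    ext n g
    simp only [hf₁, hf₂, MonoidHom.comp_apply, MonoidHom.coe_comp, Function.comp_apply,
      MulEquiv.coe_toMonoidHom, MulAut.conj_apply, MulAction.toPermHom_apply,
      Equiv.Perm.mul_apply, MulAction.toPerm_apply, smul_eq_mul]
    have h9 : (MulAction.toPerm (H.subtype h))⁻¹ g = (H.subtype h)⁻¹ • g := rfl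
    rw [h9, MulAut.smul_def, MulAut.smul_def, MulAut.inv_def, map_mul,
      MulEquiv.apply_symm_apply]
  set Φ : P →* Equiv.Perm G := SemidirectProduct.lift f₁ f₂ hcomp with hΦ
  -- each Aff x α is the image of an element of P
  apply Finset.lcm_dvd
  intro x _
  have hx : Aff x ↑α = Φ (SemidirectProduct.inl x * SemidirectProduct.inr ⟨α, Subgroup.mem_zpowers α⟩) := by
    rw [hΦ, map_mul, SemidirectProduct.lift_inl, SemidirectProduct.lift_inr]
    ext g
    simp [Aff, hf₁, hf₂, MulAction.toPermHom, MulAut.smul_def]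
  rw [hx]
  have ht := exponent_dvd_of_complement Gs Ks hGN hdisj hcard hdvd
    (SemidirectProduct.inl x * SemidirectProduct.inr ⟨α, Subgroup.mem_zpowers α⟩)
  have hdvd2 : orderOf (SemidirectProduct.inl x * SemidirectProduct.inr
      ⟨α, Subgroup.mem_zpowers α⟩ : P) ∣ Fintype.card G := by
    rw [← Nat.card_eq_fintype_card, ← hcardGs]
    exact orderOf_dvd_of_pow_eq_one ht
  exact dvd_trans (orderOf_map_dvd Φ _) hdvd2
end

section
/- Let G be a finite group, α an automorphism of G, and p a prime dividing |G|. Then the least common multiple over all x ∈ G of the orders of the permutations A_{x,α} divides (∏_{q} q^{ν_q(|G|)}) · p^{2·ν_p(exp(G))} · exp(Out(G)), where the product ∏_{q} runs over all primes q dividing |G| with q ≠ p. -/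
/-- The group of inner automorphisms of `G`, i.e. the range of `MulAut.conj : G →* MulAut G`. -/
def Inn (G : Type*) [Group G] : Subgroup (MulAut G) := (MulAut.conj : G →* MulAut G).range

instance Inn.normal (G : Type*) [Group G] : (Inn G).Normal := by
  constructor
  rintro _ ⟨g, rfl⟩ σ
  exact ⟨σ g, by ext h; simp [MulAut.conj]⟩

/-- The outer automorphism group `Out(G) := Aut(G)/Inn(G)`. -/
def Out (G : Type*) [Group G] := MulAut G ⧸ Inn G

instance (G : Type*) [Group G] : Group (Out G) := QuotientGroup.Quotient.group (Inn G)

lemma Aff_mul {G : Type*} [Group G] (x y : G) (α β : G ≃* G) :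
    Aff y β * Aff x α = Aff (y * β x) (β * α) := by
  ext g
  simp [Aff_apply, Equiv.Perm.mul_apply, mul_assoc]

lemma Aff_pow {G : Type*} [Group G] (x : G) (α : G ≃* G) (n : ℕ) :
    ∃ y : G, (Aff x α) ^ n = Aff y (α ^ n) := by
  induction n with
  | zero => exact ⟨1, by ext g; simp [Aff_apply]⟩
  | succ n ih =>
    obtain ⟨y, hy⟩ := ih
    exact ⟨y * (α ^ n) x, by rw [pow_succ, hy, Aff_mul, ← pow_succ]⟩

lemma Aff_conj_pow {G : Type*} [Group G] (y c : G) (m : ℕ) (g : G) :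
    ((Aff y (MulAut.conj c)) ^ m) g = (y * c) ^ m * g * (c⁻¹) ^ m := by
  induction m with
  | zero => simp
  | succ m ih =>
    rw [pow_succ', Equiv.Perm.mul_apply, ih, Aff_apply]
    simp only [MulAut.conj_apply, pow_succ', inv_pow]
    group

lemma Aff_order_dvd {G : Type*} [Group G] (x : G) (α : G ≃* G) :
    orderOf (Aff x α) ∣ Monoid.exponent (Out G) * Monoid.exponent G := by
  set e := Monoid.exponent (Out G) with he
  have h1 : ((QuotientGroup.mk α : Out G)) ^ e = 1 := Monoid.pow_exponent_eq_one _
  rw [← QuotientGroup.mk_pow, QuotientGroup.eq_one_iff] at h1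
  obtain ⟨c, hc⟩ := h1
  obtain ⟨y, hy⟩ := Aff_pow x α e
  apply orderOf_dvd_of_pow_eq_one
  rw [pow_mul, hy, ← hc]
  ext g
  rw [Aff_conj_pow, Monoid.pow_exponent_eq_one, Monoid.pow_exponent_eq_one]
  simp

theorem stmt_6 {G : Type*} [Group G] [Fintype G] (α : G ≃* G) {p : ℕ} (hp : p.Prime)
    (hpG : p ∣ Fintype.card G) :
    (Finset.univ.lcm fun x : G => orderOf (Aff x α)) ∣
      (∏ q ∈ (Fintype.card G).primeFactors.erase p, q ^ (Fintype.card G).factorization q) *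
        p ^ (2 * (Monoid.exponent G).factorization p) * Monoid.exponent (Out G) := by
  set N := Fintype.card G with hN
  set E := Monoid.exponent G with hE
  have hN0 : N ≠ 0 := Fintype.card_ne_zero
  have hE0 : E ≠ 0 := Monoid.exponent_ne_zero_of_finite
  have hEN : E ∣ N := Group.exponent_dvd_card
  have hmem : p ∈ N.primeFactors := Nat.mem_primeFactors.2 ⟨hp, hpG, hN0⟩
  -- the product over erased prime factors is ord_compl
  have hprod : p ^ N.factorization p * ∏ q ∈ N.primeFactors.erase p, q ^ N.factorization q = N := by
    exact (Finset.mul_prod_erase _ (fun q => q ^ N.factorization q) hmem).trans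
      (Nat.factorization_prod_pow_eq_self hN0)
  have hcompl : ∏ q ∈ N.primeFactors.erase p, q ^ N.factorization q = N / p ^ N.factorization p :=
    (Nat.div_eq_of_eq_mul_right (pow_pos hp.pos _) hprod.symm).symm
  have hstep : E ∣ (∏ q ∈ N.primeFactors.erase p, q ^ N.factorization q) *
      p ^ (2 * E.factorization p) := by
    rw [hcompl]
    calc E = p ^ E.factorization p * (E / p ^ E.factorization p) :=
          (Nat.ordProj_mul_ordCompl_eq_self E p).symm
      _ ∣ p ^ (2 * E.factorization p) * (N / p ^ N.factorization p) := by
          apply mul_dvd_mul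
          · exact pow_dvd_pow p (by omega)
          · exact Nat.ordCompl_dvd_ordCompl_of_dvd hEN p
      _ = (N / p ^ N.factorization p) * p ^ (2 * E.factorization p) := mul_comm _ _
  have hlcm : (Finset.univ.lcm fun x : G => orderOf (Aff x α)) ∣ Monoid.exponent (Out G) * E :=
    Finset.lcm_dvd fun x _ => Aff_order_dvd x α
  calc (Finset.univ.lcm fun x : G => orderOf (Aff x α)) ∣ Monoid.exponent (Out G) * E := hlcm
    _ ∣ Monoid.exponent (Out G) * ((∏ q ∈ N.primeFactors.erase p, q ^ N.factorization q) *
        p ^ (2 * E.factorization p)) := mul_dvd_mul_left _ hstep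
    _ = (∏ q ∈ N.primeFactors.erase p, q ^ N.factorization q) *
        p ^ (2 * E.factorization p) * Monoid.exponent (Out G) := by ring
end

section
/- Let p be a prime, K a field of characteristic p, and d a positive integer. If A ∈ GL_d(K) is an invertible d × d matrix of finite multiplicative order n, then ν_p(n) ≤ ⌈log_p(d)⌉, i.e., the p-adic valuation of the order of A is at most the ceiling of the base-p logarithm of d. -/
open Polynomial in
lemma aux_nilpotent_pow_card {K : Type*} [Field K] {d : ℕ}
    (N : Matrix (Fin d) (Fin d) K) (h : IsNilpotent N) : N ^ d = 0 := by
  have h1 : N.charpoly = X ^ d := by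
    rw [← sub_eq_zero]
    have := Matrix.isNilpotent_charpoly_sub_pow_of_isNilpotent h
    simpa [Fintype.card_fin] using this.eq_zero
  have h2 := N.aeval_self_charpoly
  rw [h1] at h2
  simpa using h2

theorem stmt_8 {p : ℕ} (hp : p.Prime) (K : Type*) [Field K] [CharP K p]
    (d : ℕ) (hd : 0 < d) (A : GL (Fin d) K) (hA : IsOfFinOrder A) :
    (orderOf A).factorization p ≤ Nat.clog p d := by
  haveI : Fact p.Prime := ⟨hp⟩
  set n := orderOf A with hn
  have hn0 : 0 < n := hA.orderOf_pos
  set k := n.factorization p with hk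
  set c := Nat.clog p d with hc
  set m := n / p ^ k with hm
  have hdvd : p ^ k ∣ n := Nat.ordProj_dvd n p
  set B : GL (Fin d) K := A ^ m with hB
  haveI : Nonempty (Fin d) := Fin.pos_iff_nonempty.mp hd
  have hBord : orderOf B = p ^ k := by
    rw [hB, hA.orderOf_pow, Nat.gcd_eq_right (Nat.ordCompl_dvd n p), ← hn,
      Nat.div_div_self hdvd hn0.ne']
  -- B^(p^k) = 1
  have hBpk : B ^ p ^ k = 1 := by rw [← hBord]; exact pow_orderOf_eq_one B
  set M : Matrix (Fin d) (Fin d) K := (B : Matrix (Fin d) (Fin d) K) with hM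
  have hMpk : M ^ p ^ k = 1 := by
    have : ((B ^ p ^ k : GL (Fin d) K) : Matrix (Fin d) (Fin d) K) = 1 := by
      rw [hBpk]; rfl
    simpa [Units.val_pow_eq_pow_val] using this
  have hnil : IsNilpotent (M - 1) := by
    refine ⟨p ^ k, ?_⟩
    rw [sub_pow_char_pow_of_commute p k (Commute.one_right M), hMpk, one_pow, sub_self]
  have hd0 : (M - 1) ^ d = 0 := aux_nilpotent_pow_card _ hnil
  have hdc : d ≤ p ^ c := Nat.le_pow_clog hp.one_lt d
  have hpc : (M - 1) ^ p ^ c = 0 := by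
    obtain ⟨j, hj⟩ := Nat.exists_eq_add_of_le hdc
    rw [hj, pow_add, hd0, zero_mul]
  have hMpc : M ^ p ^ c = 1 := by
    have h2 := sub_pow_char_pow_of_commute p c (Commute.one_right M)
    rw [hpc, one_pow] at h2
    rw [← sub_eq_zero, ← h2.symm]
  have hBpc : B ^ p ^ c = 1 := by
    apply Units.ext
    simpa [Units.val_pow_eq_pow_val] using hMpc
  have : p ^ k ∣ p ^ c := by rw [← hBord]; exact orderOf_dvd_of_pow_eq_one hBpc
  exact (Nat.pow_dvd_pow_iff_le_right hp.one_lt).mp this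
end

section
/- For every finite group G and every characteristic subgroup N of G, 𝔉(G) ≤ 𝔉(N) · 𝔉(G/N). -/
/-- `𝔉(G)`: the maximum over automorphisms `α` of `G` of the lcm over `x ∈ G` of the
orders of the permutations `A_{x,α}`. -/
noncomputable def Frak (G : Type*) [Group G] [Fintype G] [DecidableEq G] : ℕ :=
  Finset.univ.sup fun α : G ≃* G => Finset.univ.lcm fun x : G => orderOf (Aff x α)

theorem stmt_9 {G : Type*} [Group G] [Fintype G] [DecidableEq G]
    (N : Subgroup G) [N.Characteristic] [DecidablePred (· ∈ N)] :
    Frak G ≤ Frak N * Frak (G ⧸ N) := by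
  classical
  refine Finset.sup_le fun α _ => ?_
  have hmap : N.map α.toMonoidHom = N :=
    Subgroup.characteristic_iff_map_eq.mp ‹N.Characteristic› α
  -- the induced automorphism of the quotient
  set ᾱ : (G ⧸ N) ≃* (G ⧸ N) := QuotientGroup.congr N N α hmap with hᾱdef
  have hᾱ : ∀ g : G, ᾱ (g : G ⧸ N) = ((α g : G) : G ⧸ N) := fun g => rfl
  -- the restricted automorphism of N
  set αN : MulAut ↥N := (α.subgroupMap N).trans (MulEquiv.subgroupCongr hmap) with hαNdef
  have hαN : ∀ n : ↥N, ((αN n : ↥N) : G) = α (n : G) := fun n => rfl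
  set D : ℕ := Finset.univ.lcm (fun z : G ⧸ N => orderOf (Aff z ᾱ)) with hDdef
  set β : MulAut ↥N := αN ^ D with hβdef
  set L : ℕ := Finset.univ.lcm (fun n : ↥N => orderOf (Aff n β)) with hLdef
  -- iterates of α are multiplicative and fix 1
  have hit_mul : ∀ (k : ℕ) (a b : G), (⇑α)^[k] (a * b) = (⇑α)^[k] a * (⇑α)^[k] b := by
    intro k
    induction k with
    | zero => intro a b; simp
    | succ k ih =>
      intro a b
      simp only [Function.iterate_succ_apply', ih, map_mul]
  have hit_one : ∀ k : ℕ, (⇑α)^[k] (1 : G) = 1 := by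
    intro k
    induction k with
    | zero => simp
    | succ k ih => simp [Function.iterate_succ_apply', ih]
  -- coercion of powers of αN
  have hαNpow : ∀ (k : ℕ) (n : ↥N), (((αN ^ k) n : ↥N) : G) = (⇑α)^[k] (n : G) := by
    intro k
    induction k with
    | zero => intro n; simp
    | succ k ih =>
      intro n
      rw [pow_succ]
      have : ((αN ^ k * αN) n : ↥N) = (αN ^ k) (αN n) := rfl
      rw [this, ih, hαN, Function.iterate_succ_apply]
  have hβcoe : ∀ n : ↥N, ((β n : ↥N) : G) = (⇑α)^[D] (n : G) := fun n => hαNpow D n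
  -- key divisibility for each x
  have key : ∀ x : G, orderOf (Aff x α) ∣ D * L := by
    intro x
    set A : Equiv.Perm G := Aff x α with hAdef
    have hA1 : ∀ (k : ℕ) (z : G), (A ^ k) z = (A ^ k) 1 * (⇑α)^[k] z := by
      intro k
      induction k with
      | zero => intro z; simp
      | succ k ih =>
        intro z
        rw [pow_succ', Equiv.Perm.mul_apply, Equiv.Perm.mul_apply, ih z, ih 1,
          hAdef, Aff_apply, Aff_apply, map_mul, map_mul, Function.iterate_succ_apply']
        group
    have hproj : ∀ (k : ℕ) (z : G),
        (((A ^ k) z : G) : G ⧸ N) = ((Aff ((x : G ⧸ N)) ᾱ) ^ k) (z : G ⧸ N) := by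
      intro k
      induction k with
      | zero => intro z; simp
      | succ k ih =>
        intro z
        rw [pow_succ' A k, pow_succ' (Aff ((x : G ⧸ N)) ᾱ) k, Equiv.Perm.mul_apply,
          Equiv.Perm.mul_apply, ← ih z, hAdef, Aff_apply, Aff_apply]
        push_cast
        rw [hᾱ]
        rfl
    have hDdvd : orderOf (Aff ((x : G ⧸ N)) ᾱ) ∣ D :=
      Finset.dvd_lcm (Finset.mem_univ _)
    have hDkill : (Aff ((x : G ⧸ N)) ᾱ) ^ D = 1 :=
      orderOf_dvd_iff_pow_eq_one.mp hDdvd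
    set P : Equiv.Perm G := A ^ D with hPdef
    have hfix : ∀ g : G, g⁻¹ * P g ∈ N := by
      intro g
      have h1 : ((P g : G) : G ⧸ N) = (g : G ⧸ N) := by
        rw [hPdef, hproj D g, hDkill]; rfl
      exact (QuotientGroup.eq).mp h1.symm
    -- P restricted to each coset is affine
    have hstep : ∀ (g : G) (n : ↥N),
        P (g * (n : G)) = g * ((Aff (⟨g⁻¹ * P g, hfix g⟩ : ↥N) β) n : ↥N) := by
      intro g n
      have h1 : P (g * (n : G)) = P 1 * (⇑α)^[D] g * (⇑α)^[D] (n : G) := by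
        rw [hPdef, hA1 D, hit_mul, mul_assoc]
      have h2 : P g = P 1 * (⇑α)^[D] g := hA1 D g
      rw [h1, ← h2]
      have h3 : ((Aff (⟨g⁻¹ * P g, hfix g⟩ : ↥N) β) n : ↥N) =
          (⟨g⁻¹ * P g, hfix g⟩ : ↥N) * β n := rfl
      rw [h3]
      push_cast
      rw [hβcoe]
      group
    have hcoset : ∀ (g : G) (k : ℕ) (n : ↥N),
        (P ^ k) (g * (n : G)) = g * (((Aff (⟨g⁻¹ * P g, hfix g⟩ : ↥N) β) ^ k) n : ↥N) := by
      intro g k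
      induction k with
      | zero => intro n; simp
      | succ k ih =>
        intro n
        rw [pow_succ' P k, pow_succ' (Aff (⟨g⁻¹ * P g, hfix g⟩ : ↥N) β) k,
          Equiv.Perm.mul_apply, Equiv.Perm.mul_apply, ih n, hstep]
    have hPL : P ^ L = 1 := by
      ext g
      have := hcoset g L 1
      simp only [OneMemClass.coe_one, mul_one] at this
      rw [this]
      have hLd : orderOf (Aff (⟨g⁻¹ * P g, hfix g⟩ : ↥N) β) ∣ L :=
        Finset.dvd_lcm (Finset.mem_univ _)
      rw [orderOf_dvd_iff_pow_eq_one.mp hLd]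
      simp
    have : A ^ (D * L) = 1 := by rw [pow_mul, ← hPdef, hPL]
    exact orderOf_dvd_iff_pow_eq_one.mpr this
  -- conclude
  have hdvd : (Finset.univ.lcm fun x : G => orderOf (Aff x α)) ∣ D * L :=
    Finset.lcm_dvd fun x _ => key x
  have hDpos : D ≠ 0 := by
    rw [hDdef]
    intro h
    rcases (Finset.lcm_eq_zero_iff).mp h with ⟨z, _, hz⟩
    exact (orderOf_pos _).ne' hz
  have hLpos : L ≠ 0 := by
    rw [hLdef]
    intro h
    rcases (Finset.lcm_eq_zero_iff).mp h with ⟨n, _, hn⟩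
    exact (orderOf_pos _).ne' hn
  have hle : (Finset.univ.lcm fun x : G => orderOf (Aff x α)) ≤ D * L :=
    Nat.le_of_dvd (Nat.pos_of_ne_zero (by positivity)) hdvd
  refine hle.trans ?_
  have hD : D ≤ Frak (G ⧸ N) := Finset.le_sup (f := fun e : (G ⧸ N) ≃* (G ⧸ N) =>
    Finset.univ.lcm fun z : G ⧸ N => orderOf (Aff z e)) (Finset.mem_univ ᾱ)
  have hL : L ≤ Frak ↥N := Finset.le_sup (f := fun e : ↥N ≃* ↥N =>
    Finset.univ.lcm fun n : ↥N => orderOf (Aff n e)) (Finset.mem_univ β)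
  calc D * L ≤ Frak (G ⧸ N) * Frak ↥N := Nat.mul_le_mul hD hL
    _ = Frak ↥N * Frak (G ⧸ N) := Nat.mul_comm _ _
end

section
/- Let G be a finite group, x ∈ G and α an automorphism of G. Then every cycle length of the permutation A_{x,α} of G (i.e., the cardinality of the orbit of any point g ∈ G under the cyclic group generated by A_{x,α}) is divisible by L_G(x,α) := ord(sh_α(x)) · ∏_p p^{ν_p(ord(α))}, where the product runs over all primes p dividing both ord(sh_α(x)) and ord(α). -/
/-- `sh_α(x) := x * α(x) * α²(x) * ⋯ * α^(ord(α)-1)(x)`. -/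
noncomputable def sh {G : Type*} [Group G] (α : MulAut G) (x : G) : G :=
  ((List.range (orderOf α)).map fun i => (α ^ i) x).prod

theorem stmt_11 {G : Type*} [Group G] [Fintype G] (x : G) (α : MulAut G) (g : G) :
    orderOf (sh α x) *
        ∏ p ∈ (orderOf (sh α x)).primeFactors ∩ (orderOf α).primeFactors,
          p ^ (orderOf α).factorization p ∣
      Nat.card (MulAction.orbit (Subgroup.zpowers (Aff x α)) g) := by
  classical
  set σ := Aff x α with hσ
  set m := orderOf α with hm
  set s := sh α x with hs
  set k := orderOf s with hk
  -- the orbit cardinality is the minimal period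
  haveI : Fintype (MulAction.orbit (Subgroup.zpowers σ) g) := Fintype.ofFinite _
  rw [Nat.card_eq_fintype_card, ← MulAction.minimalPeriod_eq_card]
  set ℓ := Function.minimalPeriod (σ • ·) g with hℓ
  -- powers of the affine map
  have hA : ∀ n (h : G), (σ ^ n) h =
      ((List.range n).map fun i => (α ^ i) x).prod * (α ^ n) h := by
    intro n
    induction n with
    | zero => intro h; simp
    | succ n ih =>
      intro h
      rw [pow_succ]
      have h1 : (σ ^ n * σ) h = (σ ^ n) (σ h) := rfl
      have h2 : σ h = x * α h := rfl
      rw [h1, h2, ih, List.range_succ]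
      simp [pow_succ, mul_assoc]
  have hpowm : ∀ h : G, (σ ^ m) h = s * h := by
    intro h
    rw [hA]
    have : (α ^ m) h = h := by rw [hm, pow_orderOf_eq_one]; rfl
    rw [this, hs, sh, ← hm]
  have hpowmj : ∀ (j : ℕ) (h : G), (σ ^ (m * j)) h = s ^ j * h := by
    intro j
    induction j with
    | zero => intro h; simp
    | succ j ih =>
      intro h
      have : m * (j + 1) = m * j + m := by ring
      rw [this, pow_add]
      have h1 : (σ ^ (m * j) * σ ^ m) h = (σ ^ (m * j)) ((σ ^ m) h) := rfl
      rw [h1, hpowm, ih, pow_succ']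
      group
  have hsmul : ∀ (n : ℕ), (σ ^ n) • g = (σ ^ n) g := fun n => rfl
  rcases Nat.eq_zero_or_pos m with hm0 | hmpos
  · have hs1 : s = 1 := by rw [hs, sh, ← hm, hm0]; simp
    rw [hk, hs1, orderOf_one]
    simp
  have hm0 : m ≠ 0 := hmpos.ne'
  have hk0 : k ≠ 0 := (orderOf_pos s).ne'
  have hl0 : ℓ ≠ 0 := by
    have : NeZero ℓ := MulAction.minimalPeriod_pos σ g
    exact this.ne
  -- ℓ ∣ m * k
  have hdvd1 : ℓ ∣ m * k := by
    rw [hℓ, ← MulAction.pow_smul_eq_iff_minimalPeriod_dvd, hsmul, hpowmj,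
      hk, pow_orderOf_eq_one, one_mul]
  -- m * k ∣ lcm ℓ m
  have hdvd2 : m * k ∣ Nat.lcm ℓ m := by
    have hmdvd : m ∣ Nat.lcm ℓ m := Nat.dvd_lcm_right ℓ m
    have hldvd : ℓ ∣ Nat.lcm ℓ m := Nat.dvd_lcm_left ℓ m
    obtain ⟨j, hj⟩ := hmdvd
    have : (σ ^ (m * j)) • g = g := by
      rw [← hj]
      exact MulAction.pow_smul_eq_iff_minimalPeriod_dvd.mpr hldvd
    rw [hsmul, hpowmj, mul_eq_right] at this
    have hkj : k ∣ j := orderOf_dvd_of_pow_eq_one this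
    rw [hj]
    exact Nat.mul_dvd_mul_left m hkj
  set S := k.primeFactors ∩ m.primeFactors with hS
  set P := ∏ p ∈ S, p ^ m.factorization p with hP
  have hP0 : P ≠ 0 := by
    rw [hP]
    apply Finset.prod_ne_zero_iff.mpr
    intro p hp
    exact pow_ne_zero _ (Nat.prime_of_mem_primeFactors (Finset.mem_of_mem_inter_left hp)).ne_zero
  have hPfact : ∀ q : ℕ, P.factorization q = if q ∈ S then m.factorization q else 0 := by
    intro q
    rw [hP, Nat.factorization_prod (fun p hp =>
      pow_ne_zero _ (Nat.prime_of_mem_primeFactors (Finset.mem_of_mem_inter_left hp)).ne_zero)]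
    rw [Finset.sum_apply']
    have : ∀ p ∈ S, ((p ^ m.factorization p).factorization) q =
        if p = q then m.factorization p else 0 := by
      intro p hp
      rw [(Nat.prime_of_mem_primeFactors (Finset.mem_of_mem_inter_left hp)).factorization_pow]
      rw [Finsupp.single_apply]
    rw [Finset.sum_congr rfl this, Finset.sum_ite_eq' S q (fun p => m.factorization p)]
  rw [← Nat.factorization_le_iff_dvd (mul_ne_zero hk0 hP0) hl0, Finsupp.le_def]
  intro q
  rw [Nat.factorization_mul hk0 hP0, Finsupp.add_apply, hPfact]
  rcases Nat.eq_zero_or_pos (k.factorization q) with hkq | hkq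
  · have hqS : q ∉ S := by
      intro hq
      have : q ∈ k.primeFactors := Finset.mem_of_mem_inter_left hq
      rw [Nat.mem_primeFactors] at this
      have := Nat.Prime.factorization_pos_of_dvd this.1 hk0 this.2.1
      omega
    simp [hqS, hkq]
  · -- q divides k; use lcm ℓ m = m * k valuation comparison
    have hmain : (m * k).factorization q ≤ (Nat.lcm ℓ m).factorization q :=
      (Nat.factorization_le_iff_dvd (mul_ne_zero hm0 hk0)
        (Nat.lcm_ne_zero hl0 hm0)).mpr hdvd2 q
    rw [Nat.factorization_mul hm0 hk0, Finsupp.add_apply,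
      Nat.factorization_lcm hl0 hm0, Finsupp.sup_apply] at hmain
    have hge : m.factorization q + k.factorization q ≤ ℓ.factorization q := by
      rcases le_total (ℓ.factorization q) (m.factorization q) with h | h
      · rw [sup_eq_right.mpr h] at hmain; omega
      · rw [sup_eq_left.mpr h] at hmain; omega
    split <;> omega
end

section
/- Let G be a finite group, x ∈ G and α an automorphism of G. Then L_G(x,α) := ord(sh_α(x)) · ∏_p p^{ν_p(ord(α))} divides |G|, where the product runs over all primes p dividing both ord(sh_α(x)) and ord(α). -/
section Aux

lemma arith_aux {m n d : ℕ} (hm : 0 < m) (hn : 0 < n) (hdnm : d ∣ n * m)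
    (hcop : ∀ p : ℕ, p.Prime → p ∣ d → p ∣ m → False) :
    (m * ∏ p ∈ m.primeFactors ∩ n.primeFactors, p ^ n.factorization p) ∣ (n * m) / d := by
  have hd0 : 0 < d := Nat.pos_of_dvd_of_pos hdnm (Nat.mul_pos hn hm)
  have hcop' : Nat.Coprime d m := by
    rw [Nat.coprime_iff_gcd_eq_one]
    by_contra h
    obtain ⟨p, hp, hpd⟩ := Nat.exists_prime_and_dvd h
    exact hcop p hp (hpd.trans (Nat.gcd_dvd_left d m)) (hpd.trans (Nat.gcd_dvd_right d m))
  have hdn : d ∣ n := hcop'.dvd_of_dvd_mul_right hdnm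
  set E := ∏ p ∈ m.primeFactors ∩ n.primeFactors, p ^ n.factorization p with hE
  have hEn : E ∣ n := by
    calc E ∣ ∏ p ∈ n.primeFactors, p ^ n.factorization p :=
          Finset.prod_dvd_prod_of_subset _ _ _ Finset.inter_subset_right
    _ = n := by
        rw [← Nat.prod_factorization_eq_prod_primeFactors]
        exact Nat.factorization_prod_pow_eq_self hn.ne'
  have hEd : Nat.Coprime E d := by
    apply Nat.Coprime.prod_left
    intro p hp
    have hpm : p ∣ m := Nat.dvd_of_mem_primeFactors (Finset.mem_inter.mp hp).1
    have hpp : p.Prime := Nat.prime_of_mem_primeFactors (Finset.mem_inter.mp hp).1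
    exact Nat.Coprime.pow_left _ ((hpp.coprime_iff_not_dvd).mpr (fun h => hcop p hpp h hpm))
  obtain ⟨n', rfl⟩ := hdn
  have hEn' : E ∣ n' := Nat.Coprime.dvd_of_dvd_mul_right hEd (by rwa [mul_comm d n'] at hEn)
  have h2 : (d * n' * m) / d = n' * m := by
    rw [mul_assoc, Nat.mul_div_cancel_left _ hd0]
  rw [h2, mul_comm n' m]
  exact mul_dvd_mul_left m hEn'

abbrev Hat (G : Type*) [Group G] := SemidirectProduct G (MulAut G) (MonoidHom.id (MulAut G))

variable {G : Type*} [Group G]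

instance hatAction : MulAction (Hat G) G where
  smul z g := z.left * z.right g
  one_smul g := by
    show (1 : Hat G).left * (1 : Hat G).right g = g
    simp
  mul_smul z₁ z₂ g := by
    show (z₁ * z₂).left * (z₁ * z₂).right g = z₁.left * z₁.right (z₂.left * z₂.right g)
    simp [mul_assoc, -SemidirectProduct.mk_eq_inl_mul_inr]

lemma hat_smul_def (z : Hat G) (g : G) : z • g = z.left * z.right g := rfl

lemma hat_pow (α : MulAut G) (x : G) (k : ℕ) :
    (⟨x, α⟩ : Hat G) ^ k = ⟨((List.range k).map fun i => (α ^ i) x).prod, α ^ k⟩ := by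
  induction k with
  | zero => rfl
  | succ k ih =>
    rw [pow_succ, ih]
    ext
    · simp [List.range_succ, -SemidirectProduct.mk_eq_inl_mul_inr]
    · simp [pow_succ, -SemidirectProduct.mk_eq_inl_mul_inr]

lemma hat_pow_orderOf (α : MulAut G) (x : G) :
    (⟨x, α⟩ : Hat G) ^ (orderOf α) = SemidirectProduct.inl (sh α x) := by
  rw [hat_pow]
  ext
  · simp [sh]
  · simp [pow_orderOf_eq_one]

lemma hat_finite [Finite G] : Finite (Hat G) := by
  have hfa : Finite (MulAut G) := Finite.of_injective (MulEquiv.toEquiv) (fun a b h => by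
    ext g; exact congrArg (fun e => e.toFun g) h)
  exact Finite.of_injective (fun z : Hat G => (z.left, z.right))
    (fun a b h => SemidirectProduct.ext (congrArg Prod.fst h) (congrArg Prod.snd h))

lemma hat_orderOf [Finite G] (α : MulAut G) (x : G) :
    orderOf (⟨x, α⟩ : Hat G) = orderOf α * orderOf (sh α x) := by
  have hfa : Finite (MulAut G) := Finite.of_injective (MulEquiv.toEquiv) (fun a b h => by
    ext g; exact congrArg (fun e => e.toFun g) h)
  set w : Hat G := ⟨x, α⟩ with hw
  set n := orderOf α
  set m := orderOf (sh α x)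
  have h1 : w ^ (n * m) = 1 := by
    rw [pow_mul, hat_pow_orderOf, ← map_pow, pow_orderOf_eq_one, map_one]
  have h2 : n ∣ orderOf w := by
    have := orderOf_map_dvd (SemidirectProduct.rightHom) w
    simpa using this
  obtain ⟨t, ht⟩ := h2
  have h3 : w ^ (n * t) = 1 := by rw [← ht]; exact pow_orderOf_eq_one w
  rw [pow_mul, hat_pow_orderOf, ← map_pow] at h3
  have h4 : (sh α x) ^ t = 1 := by
    have := SemidirectProduct.inl_injective (φ := MonoidHom.id (MulAut G))
      (a₁ := (sh α x) ^ t) (a₂ := 1)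
    rw [map_one] at this
    exact this h3
  have h5 : m ∣ t := orderOf_dvd_of_pow_eq_one h4
  have h6 : n * m ∣ orderOf w := ht ▸ mul_dvd_mul_left n h5
  exact Nat.dvd_antisymm (orderOf_dvd_of_pow_eq_one h1) h6

end Aux

theorem stmt_12 {G : Type*} [Group G] [Fintype G] (x : G) (α : MulAut G) :
    orderOf (sh α x) *
        ∏ p ∈ (orderOf (sh α x)).primeFactors ∩ (orderOf α).primeFactors,
          p ^ (orderOf α).factorization p ∣
      Fintype.card G := by
  classical
  have hfa : Finite (MulAut G) := Finite.of_injective (MulEquiv.toEquiv) (fun a b h => by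
    ext g; exact congrArg (fun e => e.toFun g) h)
  have hfhat : Finite (Hat G) := hat_finite
  set n := orderOf α with hn
  set y := sh α x with hy
  set m := orderOf y with hm
  have hn0 : 0 < n := orderOf_pos α
  have hm0 : 0 < m := orderOf_pos y
  set w : Hat G := ⟨x, α⟩ with hw
  have hordw : orderOf w = n * m := hat_orderOf α x
  set C : Subgroup (Hat G) := Subgroup.zpowers w with hC
  letI : Fintype (Hat G) := Fintype.ofFinite _
  letI : Fintype ↥C := Fintype.ofFinite _
  letI : Fintype (Quotient (MulAction.orbitRel ↥C G)) := Fintype.ofFinite _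
  letI : ∀ b : G, Fintype (MulAction.stabilizer ↥C b) := fun b => Fintype.ofFinite _
  rw [MulAction.card_eq_sum_card_group_div_card_stabilizer ↥C G]
  apply Finset.dvd_sum
  intro ω _
  set g := (Quotient.out ω : G)
  set d := Fintype.card (MulAction.stabilizer ↥C g) with hd
  have hcardC : Fintype.card ↥C = n * m := by
    rw [← Nat.card_eq_fintype_card, hC, Nat.card_zpowers, hordw]
  have hdnm : d ∣ n * m := by
    rw [← hcardC, hd, ← Nat.card_eq_fintype_card, ← Nat.card_eq_fintype_card]
    exact Subgroup.card_subgroup_dvd_card _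
  have hcop : ∀ p : ℕ, p.Prime → p ∣ d → p ∣ m → False := by
    intro p hp hpd hpm
    haveI : Fact p.Prime := ⟨hp⟩
    obtain ⟨s, hs⟩ := exists_prime_orderOf_dvd_card p hpd
    have horders : orderOf ((s : ↥C) : Hat G) = p := by
      rw [Subgroup.orderOf_coe, Subgroup.orderOf_coe, hs]
    have hmem : ((s : ↥C) : Hat G) ∈ C := (s : ↥C).2
    have hfix : ((s : ↥C) : Hat G) • g = g := s.2
    -- s is in the image of inl
    obtain ⟨m', hm'⟩ := hpm
    obtain ⟨k, hk⟩ := Subgroup.mem_zpowers_iff.mp hmem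
    have hs1 : ((s : ↥C) : Hat G) ^ p = 1 := by
      rw [← horders]; exact pow_orderOf_eq_one _
    have hdvd : ((n * m : ℕ) : ℤ) ∣ k * p := by
      rw [← hordw, orderOf_dvd_iff_zpow_eq_one, zpow_mul, hk]
      rw [← zpow_natCast (((s : ↥C) : Hat G)) p] at hs1
      exact hs1
    have hdvd2 : ((n * m' : ℕ) : ℤ) ∣ k := by
      have hp0 : (p : ℤ) ≠ 0 := Int.natCast_ne_zero.mpr hp.pos.ne'
      have : ((n * m' : ℕ) : ℤ) * p ∣ k * p := by
        refine dvd_trans (dvd_of_eq ?_) hdvd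
        push_cast [hm']
        ring
      exact (mul_dvd_mul_iff_right hp0).mp this
    obtain ⟨j, hj⟩ := hdvd2
    have hsinl : ((s : ↥C) : Hat G) = SemidirectProduct.inl ((y ^ m') ^ j) := by
      rw [← hk, hj, zpow_mul, zpow_natCast, pow_mul, hat_pow_orderOf, ← map_pow, ← map_zpow]
    have hleft : (y ^ m') ^ j * g = g := by
      have h := hfix
      rw [hsinl, hat_smul_def] at h
      simpa only [SemidirectProduct.left_inl, SemidirectProduct.right_inl,
        MulAut.one_apply] using h
    have hone : ((y : G) ^ m') ^ j = 1 := mul_eq_right.mp hleft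
    have hs1' : ((s : ↥C) : Hat G) = 1 := by rw [hsinl, hone, map_one]
    rw [hs1', orderOf_one] at horders
    exact hp.one_lt.ne' horders.symm
  rw [hcardC]
  exact arith_aux hm0 hn0 hdnm hcop
end

section
/- For every finite cyclic group G, 𝔉(G) = |G|; that is, the maximum over all automorphisms α of G of the least common multiple over x ∈ G of the orders of the permutations A_{x,α} equals the order of G. -/
section Aux

variable {G : Type*} [Group G]

lemma aff_apply (x : G) (α : G ≃* G) (g : G) : Aff x α g = x * α g := rfl

lemma aff_pow_apply (x : G) (α : G ≃* G) (m : ℕ) (g : G) :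
    ((Aff x α) ^ m) g = ((Aff x α) ^ m) 1 * ((α : MulAut G) ^ m) g := by
  induction m with
  | zero => simp
  | succ n ih =>
    have h1 : ∀ h : G, ((Aff x α) ^ (n + 1)) h = x * α (((Aff x α) ^ n) h) := by
      intro h
      rw [pow_succ' (Aff x α) n]
      rfl
    rw [h1 g, h1 1, ih, map_mul, mul_assoc]
    congr 1
    rw [pow_succ' (α : MulAut G) n]
    rfl

lemma aff_pow_one_zpow (z : G) (α : G ≃* G) (m : ℕ)
    (hcomm : ∀ a b : G, a * b = b * a) (k : ℤ) :
    ((Aff (z ^ k) α) ^ m) 1 = (((Aff z α) ^ m) 1) ^ k := by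
  induction m with
  | zero => simp
  | succ n ih =>
    have h1 : ∀ (y : G) (h : G), ((Aff y α) ^ (n + 1)) h = y * α (((Aff y α) ^ n) h) := by
      intro y h
      rw [pow_succ' (Aff y α) n]
      rfl
    rw [h1, h1, ih, map_zpow]
    exact (Commute.mul_zpow (hcomm z _) k).symm

end Aux

theorem stmt_13 (G : Type*) [Group G] [Fintype G] [DecidableEq G] [IsCyclic G] :
    Frak G = Fintype.card G := by
  classical
  obtain ⟨z, hz⟩ := IsCyclic.exists_generator (α := G)
  have hcomm : ∀ a b : G, a * b = b * a := by
    intro a b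
    obtain ⟨j, hj⟩ := hz a
    obtain ⟨k, hk⟩ := hz b
    rw [← hj, ← hk, ← zpow_add, ← zpow_add, add_comm]
  apply le_antisymm
  · -- upper bound
    apply Finset.sup_le
    intro α _
    set f : Equiv.Perm G := Aff z α with hf
    set ℓ : ℕ := Function.minimalPeriod f 1 with hℓ
    have hper : Function.IsPeriodicPt f ℓ 1 := Function.isPeriodicPt_minimalPeriod f 1
    have hordpos : 0 < orderOf f := orderOf_pos f
    have hperord : Function.IsPeriodicPt f (orderOf f) 1 := by
      show f^[orderOf f] 1 = 1
      rw [← Equiv.Perm.coe_pow, pow_orderOf_eq_one]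
      rfl
    have hℓpos : 0 < ℓ := hperord.minimalPeriod_pos hordpos
    have hf1 : (f ^ ℓ) 1 = 1 := by
      rw [Equiv.Perm.coe_pow] at *
      exact hper
    -- α ^ ℓ = 1
    have hαz : ((α : MulAut G) ^ ℓ) z = z := by
      have h1 : (f ^ ℓ) z = ((f ^ ℓ) 1) * ((α : MulAut G) ^ ℓ) z := aff_pow_apply z α ℓ z
      have h2 : f 1 = z := by simp [hf, aff_apply]
      have h3 : (f ^ ℓ) z = z := by
        calc (f ^ ℓ) z = (f ^ ℓ) (f 1) := by rw [h2]
        _ = f ((f ^ ℓ) 1) := by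
              rw [← Equiv.Perm.mul_apply, ← Equiv.Perm.mul_apply, ← pow_succ, ← pow_succ']
        _ = f 1 := by rw [hf1]
        _ = z := h2
      rw [h3, hf1, one_mul] at h1
      exact h1.symm
    have hα : ∀ g : G, ((α : MulAut G) ^ ℓ) g = g := by
      intro g
      obtain ⟨k, hk⟩ := hz g
      rw [← hk, map_zpow, hαz]
    -- every Aff x α has order dividing ℓ
    have hdvd : ∀ x : G, orderOf (Aff x α) ∣ ℓ := by
      intro x
      rw [orderOf_dvd_iff_pow_eq_one]
      obtain ⟨k, hk⟩ := hz x
      ext g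
      have h1 : ((Aff x α) ^ ℓ) g = ((Aff x α) ^ ℓ) 1 * ((α : MulAut G) ^ ℓ) g :=
        aff_pow_apply x α ℓ g
      have h2 : ((Aff x α) ^ ℓ) 1 = 1 := by
        rw [← hk, aff_pow_one_zpow z α ℓ hcomm k, hf1, one_zpow]
      rw [h1, h2, hα, one_mul]
      rfl
    have hlcm : (Finset.univ.lcm fun x : G => orderOf (Aff x α)) ∣ ℓ :=
      Finset.lcm_dvd fun x _ => hdvd x
    have hle : ℓ ≤ Fintype.card G := by
      have hinj := Function.iterate_injOn_Iio_minimalPeriod (f := f) (x := (1 : G))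
      have := Finset.card_le_card_of_injOn (f := fun i => f^[i] 1)
        (s := Finset.range ℓ) (t := Finset.univ) (fun a _ => Finset.mem_univ _) ?_
      · simpa using this
      · intro a ha b hb hab
        exact hinj (by simpa using ha) (by simpa using hb) hab
    exact le_trans (Nat.le_of_dvd hℓpos hlcm) hle
  · -- lower bound using α = id
    have h1 : (Finset.univ.lcm fun x : G => orderOf (Aff x (MulEquiv.refl G)))
        = Fintype.card G := by
      have hord : ∀ x : G, orderOf (Aff x (MulEquiv.refl G)) = orderOf x := by
        intro x
        have : Aff x (MulEquiv.refl G) = Equiv.mulLeft x := by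
          ext g; rfl
        rw [this]
        apply orderOf_eq_orderOf_iff.mpr
        intro n
        rw [Equiv.pow_mulLeft]
        constructor
        · intro h
          simpa using Equiv.congr_fun h 1
        · intro h
          rw [h]
          ext g
          simp
      calc (Finset.univ.lcm fun x : G => orderOf (Aff x (MulEquiv.refl G)))
          = Finset.univ.lcm (orderOf (G := G)) := by
            apply Finset.lcm_congr rfl
            intro x _
            exact hord x
        _ = Monoid.exponent G := Monoid.lcm_orderOf_eq_exponent
        _ = Fintype.card G := by
            rw [IsCyclic.exponent_eq_card, Nat.card_eq_fintype_card]
    calc Fintype.card G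
        = Finset.univ.lcm fun x : G => orderOf (Aff x (MulEquiv.refl G)) := h1.symm
      _ ≤ Frak G := by
          unfold Frak
          exact Finset.le_sup (f := fun α : G ≃* G =>
            Finset.univ.lcm fun x : G => orderOf (Aff x α)) (Finset.mem_univ (MulEquiv.refl G))
end

section
/- For every positive integer n, the dihedral group D_n of order 2n satisfies 𝔉(D_n) = 2n; that is, the maximum over all automorphisms α of D_n of the least common multiple over x ∈ D_n of the orders of the permutations A_{x,α} equals the order of D_n. -/
namespace StmtAux14

open DihedralGroup

variable {n : ℕ}

theorem aff_apply {G : Type*} [Group G] (x : G) (α : G ≃* G) (g : G) :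
    Aff x α g = x * α g := rfl

/-- Geometric sum `1 + a + ... + a^(k-1)`. -/
def geoS (a : ZMod n) : ℕ → ZMod n
  | 0 => 0
  | k + 1 => 1 + a * geoS a k

@[simp] lemma geoS_zero (a : ZMod n) : geoS a 0 = 0 := rfl

lemma geoS_succ (a : ZMod n) (k : ℕ) : geoS a (k + 1) = 1 + a * geoS a k := rfl

lemma geoS_add (a : ZMod n) (i k : ℕ) :
    geoS a (i + k) = geoS a i + a ^ i * geoS a k := by
  induction i with
  | zero => simp
  | succ i ih =>
    rw [show i + 1 + k = (i + k) + 1 by omega, geoS_succ, ih, geoS_succ, pow_succ]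
    ring

lemma sub_one_mul_geoS (a : ZMod n) (k : ℕ) : (a - 1) * geoS a k = a ^ k - 1 := by
  induction k with
  | zero => simp
  | succ k ih =>
    rw [geoS_succ, pow_succ]
    calc (a - 1) * (1 + a * geoS a k) = (a - 1) + a * ((a - 1) * geoS a k) := by ring
    _ = (a - 1) + a * (a ^ k - 1) := by rw [ih]
    _ = a ^ k * a - 1 := by ring

lemma geoS_two_mul (a : ZMod n) (k : ℕ) :
    geoS a (2 * k) = (1 + a) * geoS (a ^ 2) k := by
  induction k with
  | zero => simp
  | succ k ih =>
    rw [show 2 * (k + 1) = (2 * k + 1) + 1 by omega, geoS_succ, geoS_succ, ih, geoS_succ]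
    ring

lemma geoS_one (k : ℕ) : geoS (1 : ZMod n) k = (k : ZMod n) := by
  induction k with
  | zero => simp
  | succ k ih => rw [geoS_succ, ih]; push_cast; ring

lemma exists_good_k [NeZero n] {a : ZMod n} (ha : IsUnit a) :
    ∃ k : ℕ, 0 < k ∧ k ≤ n ∧ (a ^ 2) ^ k = 1 ∧ geoS (a ^ 2) k = 0 := by
  have key : ∀ i j : ℕ, i < j → geoS (a ^ 2) i = geoS (a ^ 2) j →
      (a ^ 2) ^ (j - i) = 1 ∧ geoS (a ^ 2) (j - i) = 0 := by
    intro i j hij heq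
    have h1 : geoS (a ^ 2) (i + (j - i)) =
        geoS (a ^ 2) i + (a ^ 2) ^ i * geoS (a ^ 2) (j - i) := geoS_add ..
    rw [show i + (j - i) = j by omega, ← heq] at h1
    have h2 : (a ^ 2) ^ i * geoS (a ^ 2) (j - i) = 0 := (left_eq_add.mp h1)
    have hu : IsUnit ((a ^ 2) ^ i) := (ha.pow 2).pow i
    have h3 : geoS (a ^ 2) (j - i) = 0 := (hu.mul_right_eq_zero).mp h2
    have h4 : (a ^ 2) ^ (j - i) - 1 = 0 := by
      rw [← sub_one_mul_geoS (a ^ 2) (j - i), h3, mul_zero]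
    exact ⟨sub_eq_zero.mp h4, h3⟩
  have hlt : Fintype.card (ZMod n) < Fintype.card (Fin (n + 1)) := by
    rw [ZMod.card, Fintype.card_fin]; omega
  obtain ⟨i, j, hne, heq⟩ :=
    Fintype.exists_ne_map_eq_of_card_lt (fun i : Fin (n + 1) => geoS (a ^ 2) i.val) hlt
  rcases hne.lt_or_gt with h | h
  · obtain ⟨h1, h2⟩ := key i.val j.val (Fin.lt_def.mp h) heq
    exact ⟨j.val - i.val, by have := Fin.lt_def.mp h; omega,
      by have := j.isLt; omega, h1, h2⟩
  · obtain ⟨h1, h2⟩ := key j.val i.val (Fin.lt_def.mp h) heq.symm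
    exact ⟨i.val - j.val, by have := Fin.lt_def.mp h; omega,
      by have := i.isLt; omega, h1, h2⟩

section Formulas

variable (α : DihedralGroup n ≃* DihedralGroup n) (a b : ZMod n)

lemma aff_r_pow
    (hr : ∀ i : ZMod n, α (r i) = r (a * i))
    (hs : ∀ i : ZMod n, α (sr i) = sr (b + a * i))
    (c : ZMod n) (m : ℕ) :
    (∀ i : ZMod n, ((Aff (r c) α) ^ m) (r i) = r (a ^ m * i + geoS a m * c)) ∧
    (∀ i : ZMod n, ((Aff (r c) α) ^ m) (sr i) = sr (a ^ m * i + geoS a m * (b - c))) := by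
  induction m with
  | zero => constructor <;> intro i <;> simp
  | succ m ih =>
    obtain ⟨ih1, ih2⟩ := ih
    constructor <;> intro i
    · rw [pow_succ', Equiv.Perm.mul_apply, ih1]
      simp only [aff_apply, hr, hs, r_mul_r, r_mul_sr]
      rw [geoS_succ, pow_succ]
      exact congrArg r (by ring)
    · rw [pow_succ', Equiv.Perm.mul_apply, ih2]
      simp only [aff_apply, hr, hs, r_mul_r, r_mul_sr]
      rw [geoS_succ, pow_succ]
      exact congrArg sr (by ring)

lemma aff_sr_pow
    (hr : ∀ i : ZMod n, α (r i) = r (a * i))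
    (hs : ∀ i : ZMod n, α (sr i) = sr (b + a * i))
    (c : ZMod n) (m : ℕ) :
    (∀ i : ZMod n, ((Aff (sr c) α) ^ (2 * m)) (r i) =
      r ((a ^ 2) ^ m * i + geoS (a ^ 2) m * (b + a * c - c))) ∧
    (∀ i : ZMod n, ((Aff (sr c) α) ^ (2 * m)) (sr i) =
      sr ((a ^ 2) ^ m * i + geoS (a ^ 2) m * (a * b + c - a * c))) := by
  induction m with
  | zero => constructor <;> intro i <;> simp
  | succ m ih =>
    obtain ⟨ih1, ih2⟩ := ih
    have hE : (Aff (sr c) α) ^ (2 * (m + 1)) =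
        Aff (sr c) α * (Aff (sr c) α * (Aff (sr c) α) ^ (2 * m)) := by
      rw [show 2 * (m + 1) = 2 * m + 1 + 1 by omega, pow_succ', pow_succ']
    constructor <;> intro i
    · rw [hE, Equiv.Perm.mul_apply, Equiv.Perm.mul_apply, ih1]
      simp only [aff_apply, hr, hs, sr_mul_r, sr_mul_sr]
      rw [geoS_succ, pow_succ]
      exact congrArg r (by ring)
    · rw [hE, Equiv.Perm.mul_apply, Equiv.Perm.mul_apply, ih2]
      simp only [aff_apply, hr, hs, sr_mul_r, sr_mul_sr]
      rw [geoS_succ, pow_succ]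
      exact congrArg sr (by ring)

lemma aff_pow_eq_one_of
    (hr : ∀ i : ZMod n, α (r i) = r (a * i))
    (hs : ∀ i : ZMod n, α (sr i) = sr (b + a * i))
    {k : ℕ} (hk1 : (a ^ 2) ^ k = 1) (hk2 : geoS (a ^ 2) k = 0) :
    ∀ x : DihedralGroup n, (Aff x α) ^ (2 * k) = 1 := by
  have ha2k : a ^ (2 * k) = 1 := by rw [pow_mul]; exact hk1
  have hS2k : geoS a (2 * k) = 0 := by rw [geoS_two_mul, hk2, mul_zero]
  rintro (c | c) <;> apply Equiv.ext <;> rintro (i | i)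
  · rw [(aff_r_pow α a b hr hs c (2 * k)).1 i, ha2k, hS2k]; simp
  · rw [(aff_r_pow α a b hr hs c (2 * k)).2 i, ha2k, hS2k]; simp
  · rw [(aff_sr_pow α a b hr hs c k).1 i, hk1, hk2]; simp
  · rw [(aff_sr_pow α a b hr hs c k).2 i, hk1, hk2]; simp

end Formulas

lemma pow3_eq_one {G : Type*} [Group G] (x : G) (α : G ≃* G)
    (h : ∀ g, x * α (x * α (x * α g)) = g) : (Aff x α) ^ 3 = 1 := by
  have h3 : (Aff x α) ^ 3 = Aff x α * (Aff x α * Aff x α) := by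
    rw [show (3 : ℕ) = 1 + 1 + 1 from rfl, pow_succ', pow_succ', pow_one]
  apply Equiv.ext
  intro g
  rw [h3, Equiv.Perm.mul_apply, Equiv.Perm.mul_apply]
  simpa only [aff_apply, Equiv.Perm.one_apply] using h g

lemma pow4_eq_one {G : Type*} [Group G] (x : G) (α : G ≃* G)
    (h : ∀ g, x * α (x * α (x * α (x * α g))) = g) : (Aff x α) ^ 4 = 1 := by
  have h4 : (Aff x α) ^ 4 = Aff x α * (Aff x α * (Aff x α * Aff x α)) := by
    rw [show (4 : ℕ) = 1 + 1 + 1 + 1 from rfl, pow_succ', pow_succ', pow_succ', pow_one]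
  apply Equiv.ext
  intro g
  rw [h4, Equiv.Perm.mul_apply, Equiv.Perm.mul_apply, Equiv.Perm.mul_apply]
  simpa only [aff_apply, Equiv.Perm.one_apply] using h g

lemma lcm_le [NeZero n] (α : DihedralGroup n ≃* DihedralGroup n) :
    (Finset.univ.lcm fun x : DihedralGroup n => orderOf (Aff x α)) ≤ 2 * n := by
  suffices h : ∃ M, 0 < M ∧ M ≤ 2 * n ∧ ∀ x : DihedralGroup n, (Aff x α) ^ M = 1 by
    obtain ⟨M, hM0, hMle, hM⟩ := h
    refine le_trans (Nat.le_of_dvd hM0 ?_) hMle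
    exact Finset.lcm_dvd fun x _ => orderOf_dvd_of_pow_eq_one (hM x)
  have hNn := NeZero.pos n
  cases h1 : α (r 1) with
  | r a =>
    have hrpow : ∀ m : ℕ, (r a : DihedralGroup n) ^ m = r ((m : ZMod n) * a) := by
      intro m
      induction m with
      | zero => rw [pow_zero, Nat.cast_zero, zero_mul, one_def]
      | succ m ih =>
        rw [pow_succ, ih, r_mul_r]
        exact congrArg r (by push_cast; ring)
    have hr : ∀ i : ZMod n, α (r i) = r (a * i) := by
      intro i
      conv_lhs => rw [← ZMod.natCast_zmod_val i]
      rw [← r_one_pow, map_pow, h1, hrpow, ZMod.natCast_zmod_val]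
      exact congrArg r (mul_comm _ _)
    cases h2 : α (sr 0) with
    | r e =>
      exfalso
      have himg : ∀ g : DihedralGroup n, ∃ j, α g = r j := by
        rintro (i | i)
        · exact ⟨a * i, hr i⟩
        · refine ⟨e + a * i, ?_⟩
          have hsi : (sr i : DihedralGroup n) = sr 0 * r i := by rw [sr_mul_r, zero_add]
          rw [hsi, map_mul, h2, hr, r_mul_r]
      obtain ⟨j, hj⟩ := himg (α.symm (sr 0))
      rw [MulEquiv.apply_symm_apply] at hj
      exact absurd hj (by simp)
    | sr b =>
      have hs : ∀ i : ZMod n, α (sr i) = sr (b + a * i) := by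
        intro i
        have hsi : (sr i : DihedralGroup n) = sr 0 * r i := by rw [sr_mul_r, zero_add]
        rw [hsi, map_mul, h2, hr, sr_mul_r]
      have ha : IsUnit a := by
        cases h3 : α.symm (r 1) with
        | r a' =>
          have h4 : α (r a') = r 1 := by rw [← h3, MulEquiv.apply_symm_apply]
          rw [hr] at h4
          exact IsUnit.of_mul_eq_one a' (DihedralGroup.r.inj h4)
        | sr c' =>
          have h4 : α (sr c') = r 1 := by rw [← h3, MulEquiv.apply_symm_apply]
          rw [hs] at h4
          exact absurd h4 (by simp)
      obtain ⟨k, hk0, hkn, hk1, hk2⟩ := exists_good_k ha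
      exact ⟨2 * k, by omega, by omega, aff_pow_eq_one_of α a b hr hs hk1 hk2⟩
  | sr c =>
    -- `α` maps a rotation to a reflection; this forces `n ∣ 2`.
    have h2 : ((2 : ℕ) : ZMod n) = 0 := by
      have hmul : α (r 1 * r 1) = sr c * sr c := by rw [map_mul, h1]
      rw [r_mul_r, sr_mul_sr, sub_self] at hmul
      have h3 : (r (1 + 1) : DihedralGroup n) = 1 :=
        α.injective (by rw [hmul, map_one, one_def])
      rw [one_def] at h3
      have h4 : ((1 : ZMod n) + 1) = 0 := DihedralGroup.r.inj h3
      calc ((2 : ℕ) : ZMod n) = (1 : ZMod n) + 1 := by push_cast; ring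
      _ = 0 := h4
    have hn12 : n = 1 ∨ n = 2 :=
      (Nat.dvd_prime Nat.prime_two).mp ((ZMod.natCast_eq_zero_iff 2 n).mp h2)
    rcases hn12 with rfl | rfl
    · exfalso
      have hr1 : (r (1 : ZMod 1) : DihedralGroup 1) = 1 := by
        rw [one_def]; exact congrArg r (Subsingleton.elim _ _)
      rw [hr1, map_one, one_def] at h1
      exact absurd h1 (by intro h; cases h)
    · -- n = 2 : the exotic automorphisms
      have hzm : ∀ z : ZMod 2, z = 0 ∨ z = 1 := by decide
      have t0 : α (r 0) = r 0 := by rw [← one_def, map_one, one_def]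
      have hsr1 : (sr 1 : DihedralGroup 2) = sr 0 * r 1 := by rw [sr_mul_r, zero_add]
      cases h2 : α (sr 0) with
      | r e =>
        have he : e = 1 := by
          rcases hzm e with rfl | rfl
          · exfalso
            have h4 : α (sr 0) = α 1 := by rw [h2, map_one, one_def]
            have h5 := α.injective h4
            rw [one_def] at h5
            exact absurd h5 (by intro h; cases h)
          · rfl
        subst he
        have t3 : α (sr 1) = sr (c - 1) := by
          rw [hsr1, map_mul, h2, h1, r_mul_sr]
        rcases hzm c with rfl | rfl
        · -- transposition r1 ↔ sr0 : all affine maps have order dividing 4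
          have hα : ∀ g : DihedralGroup 2, α g =
              (fun g => match g with
                | r i => if i = 0 then r 0 else sr 0
                | sr i => if i = 0 then r 1 else sr 1) g := by
            rintro (i | i) <;> rcases hzm i with rfl | rfl
            · exact t0
            · exact h1
            · exact h2
            · rw [t3]; decide
          have key : ∀ x g : DihedralGroup 2,
              x * (fun g => match g with
                | r i => if i = 0 then r 0 else sr 0
                | sr i => if i = 0 then r 1 else sr 1)
                (x * (fun g => match g with
                | r i => if i = 0 then r 0 else sr 0
                | sr i => if i = 0 then r 1 else sr 1)
                (x * (fun g => match g with
                | r i => if i = 0 then r 0 else sr 0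
                | sr i => if i = 0 then r 1 else sr 1)
                (x * (fun g => match g with
                | r i => if i = 0 then r 0 else sr 0
                | sr i => if i = 0 then r 1 else sr 1) g))) = g := by decide
          refine ⟨4, by omega, by omega, fun x => pow4_eq_one x α fun g => ?_⟩
          simp only [hα]
          exact key x g
        · -- 3-cycle r1 → sr1 → sr0 → r1
          have hα : ∀ g : DihedralGroup 2, α g =
              (fun g => match g with
                | r i => if i = 0 then r 0 else sr 1
                | sr i => if i = 0 then r 1 else sr 0) g := by
            rintro (i | i) <;> rcases hzm i with rfl | rfl
            · exact t0
            · exact h1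
            · exact h2
            · rw [t3]; decide
          have key : ∀ x g : DihedralGroup 2,
              x * (fun g => match g with
                | r i => if i = 0 then r 0 else sr 1
                | sr i => if i = 0 then r 1 else sr 0)
                (x * (fun g => match g with
                | r i => if i = 0 then r 0 else sr 1
                | sr i => if i = 0 then r 1 else sr 0)
                (x * (fun g => match g with
                | r i => if i = 0 then r 0 else sr 1
                | sr i => if i = 0 then r 1 else sr 0) g)) = g := by decide
          refine ⟨3, by omega, by omega, fun x => pow3_eq_one x α fun g => ?_⟩
          simp only [hα]
          exact key x g
      | sr f =>
        have hf : f = c + 1 := by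
          rcases hzm c with rfl | rfl <;> rcases hzm f with rfl | rfl
          · exfalso
            have h5 := α.injective (h2.trans h1.symm)
            exact absurd h5 (by decide)
          · rfl
          · rfl
          · exfalso
            have h5 := α.injective (h2.trans h1.symm)
            exact absurd h5 (by decide)
        subst hf
        have t3 : α (sr 1) = r 1 := by
          rw [hsr1, map_mul, h2, h1, sr_mul_sr]
          exact congrArg r ((by decide : ∀ z : ZMod 2, z - (z + 1) = 1) c)
        rcases hzm c with rfl | rfl
        · -- 3-cycle r1 → sr0 → sr1 → r1
          have hα : ∀ g : DihedralGroup 2, α g =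
              (fun g => match g with
                | r i => if i = 0 then r 0 else sr 0
                | sr i => if i = 0 then sr 1 else r 1) g := by
            rintro (i | i) <;> rcases hzm i with rfl | rfl
            · exact t0
            · exact h1
            · rw [h2]; decide
            · exact t3
          have key : ∀ x g : DihedralGroup 2,
              x * (fun g => match g with
                | r i => if i = 0 then r 0 else sr 0
                | sr i => if i = 0 then sr 1 else r 1)
                (x * (fun g => match g with
                | r i => if i = 0 then r 0 else sr 0
                | sr i => if i = 0 then sr 1 else r 1)
                (x * (fun g => match g with
                | r i => if i = 0 then r 0 else sr 0
                | sr i => if i = 0 then sr 1 else r 1) g)) = g := by decide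
          refine ⟨3, by omega, by omega, fun x => pow3_eq_one x α fun g => ?_⟩
          simp only [hα]
          exact key x g
        · -- transposition r1 ↔ sr1
          have hα : ∀ g : DihedralGroup 2, α g =
              (fun g => match g with
                | r i => if i = 0 then r 0 else sr 1
                | sr i => if i = 0 then sr 0 else r 1) g := by
            rintro (i | i) <;> rcases hzm i with rfl | rfl
            · exact t0
            · exact h1
            · rw [h2]; decide
            · exact t3
          have key : ∀ x g : DihedralGroup 2,
              x * (fun g => match g with
                | r i => if i = 0 then r 0 else sr 1
                | sr i => if i = 0 then sr 0 else r 1)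
                (x * (fun g => match g with
                | r i => if i = 0 then r 0 else sr 1
                | sr i => if i = 0 then sr 0 else r 1)
                (x * (fun g => match g with
                | r i => if i = 0 then r 0 else sr 1
                | sr i => if i = 0 then sr 0 else r 1)
                (x * (fun g => match g with
                | r i => if i = 0 then r 0 else sr 1
                | sr i => if i = 0 then sr 0 else r 1) g))) = g := by decide
          refine ⟨4, by omega, by omega, fun x => pow4_eq_one x α fun g => ?_⟩
          simp only [hα]
          exact key x g

/-- The automorphism `r i ↦ r i`, `sr i ↦ sr (i+1)`. -/
def alpha0 : DihedralGroup n ≃* DihedralGroup n where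
  toFun g := match g with
    | r i => r i
    | sr i => sr (i + 1)
  invFun g := match g with
    | r i => r i
    | sr i => sr (i - 1)
  left_inv := by
    rintro (i | i)
    · rfl
    · exact congrArg sr (by ring)
  right_inv := by
    rintro (i | i)
    · rfl
    · exact congrArg sr (by ring)
  map_mul' := by
    rintro (i | i) (j | j)
    · rfl
    · show (sr (j - i + 1) : DihedralGroup n) = sr (j + 1 - i)
      exact congrArg sr (by ring)
    · show (sr (i + j + 1) : DihedralGroup n) = sr (i + 1 + j)
      exact congrArg sr (by ring)
    · show (r (j - i) : DihedralGroup n) = r (j + 1 - (i + 1))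
      exact congrArg r (by ring)

lemma alpha0_r (i : ZMod n) : alpha0 (r i) = r i := rfl

lemma alpha0_sr (i : ZMod n) : alpha0 (sr i) = sr (i + 1) := rfl

lemma hr0 : ∀ i : ZMod n, alpha0 (r i) = r ((1 : ZMod n) * i) := by
  intro i; rw [alpha0_r, one_mul]

lemma hs0 : ∀ i : ZMod n, alpha0 (sr i) = sr ((1 : ZMod n) + 1 * i) := by
  intro i; rw [alpha0_sr]; exact congrArg sr (by ring)

lemma A0_pow (m : ℕ) :
    (∀ i : ZMod n, ((Aff (sr 0) (alpha0 (n := n))) ^ (2 * m)) (r i) = r (i + (m : ZMod n))) ∧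
    (∀ i : ZMod n, ((Aff (sr 0) (alpha0 (n := n))) ^ (2 * m)) (sr i) = sr (i + (m : ZMod n))) := by
  have h := aff_sr_pow (alpha0 (n := n)) 1 1 hr0 hs0 0 m
  constructor <;> intro i
  · rw [h.1 i]
    exact congrArg r (by rw [one_pow, one_pow, geoS_one]; ring)
  · rw [h.2 i]
    exact congrArg sr (by rw [one_pow, one_pow, geoS_one]; ring)

lemma two_n_dvd_orderOf_A0 [NeZero n] :
    2 * n ∣ orderOf (Aff (sr 0) (alpha0 (n := n))) := by
  have hpow := pow_orderOf_eq_one (Aff (sr 0) (alpha0 (n := n)))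
  set m := orderOf (Aff (sr 0) (alpha0 (n := n))) with hm
  have happ : ((Aff (sr 0) (alpha0 (n := n))) ^ m) (r 0) = r 0 := by
    rw [hpow]; rfl
  rcases Nat.even_or_odd m with ⟨q, hq⟩ | ⟨q, hq⟩
  · rw [hq, show q + q = 2 * q by omega, (A0_pow q).1 0] at happ
    have h5 : ((0 : ZMod n) + q) = 0 := DihedralGroup.r.inj happ
    rw [zero_add] at h5
    have h6 : n ∣ q := (ZMod.natCast_eq_zero_iff q n).mp h5
    obtain ⟨t, rfl⟩ := h6
    exact ⟨t, by rw [hq]; ring⟩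
  · exfalso
    rw [hq, pow_succ', Equiv.Perm.mul_apply, (A0_pow q).1 0] at happ
    rw [aff_apply, alpha0_r, sr_mul_r] at happ
    exact absurd happ (by intro h; cases h)

end StmtAux14

theorem stmt_14 (n : ℕ) [NeZero n] : Frak (DihedralGroup n) = 2 * n := by
  unfold Frak
  apply le_antisymm
  · exact Finset.sup_le fun α _ => StmtAux14.lcm_le α
  · have h1 : 2 * n ∣ Finset.univ.lcm
        (fun x : DihedralGroup n => orderOf (Aff x (StmtAux14.alpha0 (n := n)))) :=
      dvd_trans StmtAux14.two_n_dvd_orderOf_A0 (Finset.dvd_lcm (Finset.mem_univ _))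
    have h2 : (Finset.univ.lcm
        (fun x : DihedralGroup n => orderOf (Aff x (StmtAux14.alpha0 (n := n))))) ≠ 0 := by
      intro h0
      rw [Finset.lcm_eq_zero_iff] at h0
      have hmem := h0
      simp only [Set.mem_image, Finset.coe_univ, Set.mem_univ, Finset.mem_univ, true_and] at hmem
      obtain ⟨x, hx⟩ := hmem
      exact (orderOf_pos _).ne' hx
    have h3 : 2 * n ≤ Finset.univ.lcm
        (fun x : DihedralGroup n => orderOf (Aff x (StmtAux14.alpha0 (n := n)))) :=
      Nat.le_of_dvd (Nat.pos_of_ne_zero h2) h1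
    exact le_trans h3 (Finset.le_sup (f := fun α : DihedralGroup n ≃* DihedralGroup n =>
      Finset.univ.lcm fun x : DihedralGroup n => orderOf (Aff x α)) (Finset.mem_univ _))
end

section
/- Let G be a group, α an automorphism of G, x ∈ G, H an α-invariant subgroup of G, and g ∈ G a coset representative such that A_{x,α} maps the coset gH into itself; write A_{x,α}(g) = g·h₀ with h₀ ∈ H. Then the action of A_{x,α} on gH is isomorphic to the action of A_{h₀, α|_H} on H: there exists a bijection φ : H → gH such that A_{x,α}(φ(h)) = φ(A_{h₀, α|_H}(h)) for all h ∈ H, where α|_H denotes the automorphism of H obtained by restricting α. -/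
open scoped Pointwise

theorem stmt_15 {G : Type*} [Group G] (α : G ≃* G) (x : G) (H : Subgroup G)
    -- `H` is `α`-invariant:
    (hinv : ∀ g : G, α g ∈ H ↔ g ∈ H)
    -- `αH` is the restriction of `α` to an automorphism of `H`:
    (αH : H ≃* H) (hαH : ∀ h : H, (αH h : G) = α (h : G))
    (g : G)
    -- `A_{x,α}` maps the coset `gH` into itself:
    (hmaps : ∀ y ∈ g • (H : Set G), Aff x α y ∈ g • (H : Set G))
    -- `A_{x,α}(g) = g * h₀` with `h₀ ∈ H`:
    (h₀ : H) (hh₀ : Aff x α g = g * (h₀ : G)) :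
    ∃ φ : H ≃ (g • (H : Set G) : Set G),
      ∀ h : H, Aff x α (φ h : G) = (φ (Aff h₀ αH h) : G) := by
  have hxg : x * α g = g * (h₀ : G) := hh₀
  refine ⟨{
    toFun := fun h => ⟨g * h, ⟨(h : G), h.2, rfl⟩⟩
    invFun := fun y => ⟨g⁻¹ * y, by
      obtain ⟨z, hz, hy⟩ := y.2
      simp only [smul_eq_mul] at hy; rw [← hy, inv_mul_cancel_left]; exact hz⟩
    left_inv := fun h => by ext; simp
    right_inv := fun y => by ext; simp }, ?_⟩
  intro h
  show x * α (g * h) = g * ((h₀ : G) * αH h)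
  rw [map_mul, hαH, ← mul_assoc, hxg]
  group
end
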